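/- arXiv:1601.03506 — 6 statements merged into one kernel-verified Lean document; each statement's English description precedes it below -/
import Mathlib

section
/- Let p be a prime with p > 3 and p ≡ 3 (mod 4) (so that (p+1)/2 is an even integer). Then the Bernoulli number B_{(p+1)/2} is a p-integral rational number that is not congruent to 0 modulo p; equivalently, its p-adic valuation padicValRat p (bernoulli ((p+1)/2)) equals 0. -/
open Finset

section Aux

variable (p : ℕ)

private lemma aux_sum_odd_even {M : Type*} [AddCommMonoid M] (f : ℕ → M) :
    ∀ n : ℕ, ∑ m ∈ range (2 * n + 1), f m
      = f 0 + ∑ b ∈ range n, (f (2 * b + 1) + f (2 * b + 2))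
  | 0 => by simp
  | n + 1 => by
    have h1 : 2 * (n + 1) + 1 = (2 * n + 1) + 1 + 1 := by ring
    rw [h1, sum_range_succ, sum_range_succ, aux_sum_odd_even f n, sum_range_succ]
    have h2 : 2 * n + 1 + 1 = 2 * n + 2 := rfl
    rw [h2]
    abel

private lemma aux_dvd_sum_pow (hp : p.Prime) (l : ℕ) (h1 : l < p - 1) :
    (p : ℤ) ∣ ∑ m ∈ range p, (m : ℤ) ^ l := by
  haveI := Fact.mk hp
  rw [← ZMod.intCast_zmod_eq_zero_iff_dvd]
  push_cast
  have hsum : (∑ m ∈ range p, (m : ZMod p) ^ l) = ∑ x : ZMod p, x ^ l := by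
    refine Finset.sum_nbij' (fun m => (m : ZMod p)) (fun x => x.val) ?_ ?_ ?_ ?_ ?_
    · intro a _; exact mem_univ _
    · intro x _; exact mem_range.2 (ZMod.val_lt x)
    · intro a ha; exact ZMod.val_cast_of_lt (mem_range.1 ha)
    · intro x _; exact ZMod.natCast_rightInverse x
    · intro a _; rfl
  rw [hsum]
  have hcard : l < Fintype.card (ZMod p) - 1 := by rwa [ZMod.card]
  exact FiniteField.sum_pow_lt_card_sub_one (ZMod p) l hcard

private lemma aux_norm_int_eq_one (hp : p.Prime) {z : ℤ} (hz : ¬ (p : ℤ) ∣ z) :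
    haveI := Fact.mk hp
    ‖(z : ℚ_[p])‖ = 1 := by
  haveI := Fact.mk hp
  refine le_antisymm (Padic.norm_int_le_one z) ?_
  by_contra h
  push_neg at h
  exact hz ((Padic.norm_intCast_lt_one_iff (k := z)).1 h)

/-- Key inductive approximation: for even `i` with `2 ≤ i ≤ p/2 + 1`,
`B_i ≡ (∑_{m<p} m^i)/p (mod p)` p-adically. -/
private lemma aux_bernoulli_approx (hp : p.Prime) (hp3 : 3 < p) :
    haveI := Fact.mk hp
    ∀ i : ℕ, 2 ≤ i → i ≤ p / 2 + 1 → Even i →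
      ‖((bernoulli i : ℚ) : ℚ_[p])
        - ((∑ m ∈ range p, (m : ℚ) ^ i : ℚ) : ℚ_[p]) / (p : ℚ_[p])‖ ≤ (p : ℝ)⁻¹ := by
  haveI := Fact.mk hp
  have hp0 : (0:ℝ) < p := by positivity
  have hodd : p % 2 = 1 := Nat.odd_iff.mp (hp.odd_of_ne_two (by omega))
  have hpinv1 : (p : ℝ)⁻¹ ≤ 1 := by
    rw [inv_le_one_iff₀]; right; exact_mod_cast hp.one_lt.le
  intro i
  induction i using Nat.strong_induction_on with
  | _ i IH =>
    intro h2 hle heven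
    have hi1 : ¬ (p : ℤ) ∣ ((i : ℤ) + 1) := by
      intro hdvd
      have h1 : (i : ℤ) + 1 = ((i + 1 : ℕ) : ℤ) := by push_cast; ring
      rw [h1, Int.natCast_dvd_natCast] at hdvd
      have := Nat.le_of_dvd (Nat.succ_pos i) hdvd
      omega
    have hni1 : ‖((i : ℚ_[p]) + 1)‖ = 1 := by
      have := aux_norm_int_eq_one p hp hi1
      rwa [show (((i : ℤ) + 1 : ℤ) : ℚ_[p]) = (i : ℚ_[p]) + 1 by push_cast; ring] at this
    have hi1ne : ((i : ℚ_[p]) + 1) ≠ 0 := by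
      intro h; rw [h, norm_zero] at hni1; norm_num at hni1
    have hppos : (p : ℚ_[p]) ≠ 0 := Nat.cast_ne_zero.2 hp.ne_zero
    -- Faulhaber, cast to ℚ_[p]
    set t : ℕ → ℚ_[p] := fun l =>
      ((bernoulli l : ℚ) : ℚ_[p]) * ((i + 1).choose l : ℚ_[p]) * (p : ℚ_[p]) ^ (i + 1 - l)
        / ((i : ℚ_[p]) + 1) with ht
    have hfq : ((∑ m ∈ range p, (m : ℚ) ^ i : ℚ) : ℚ_[p]) = ∑ l ∈ range (i + 1), t l := by
      rw [sum_range_pow p i]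
      push_cast
      simp only [ht, div_eq_mul_inv]
    have hlast : t i = ((bernoulli i : ℚ) : ℚ_[p]) * (p : ℚ_[p]) := by
      have hc : ((i + 1).choose i : ℚ_[p]) = (i : ℚ_[p]) + 1 := by
        rw [Nat.choose_succ_self_right]; push_cast; ring
      have he : i + 1 - i = 1 := by omega
      rw [ht]
      simp only [hc, he, pow_one]
      field_simp
    have key : ((bernoulli i : ℚ) : ℚ_[p])
        - ((∑ m ∈ range p, (m : ℚ) ^ i : ℚ) : ℚ_[p]) / (p : ℚ_[p])
        = -(∑ l ∈ range i, t l) / (p : ℚ_[p]) := by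
      rw [hfq, sum_range_succ, hlast]
      field_simp
      ring
    rw [key, norm_div, norm_neg, Padic.norm_p]
    -- bound the sum
    have hS : ‖∑ l ∈ range i, t l‖ ≤ (p : ℝ)⁻¹ ^ 2 := by
      apply IsUltrametricDist.norm_sum_le_of_forall_le_of_nonneg (by positivity)
      intro l hl
      rw [mem_range] at hl
      -- bound on ‖bernoulli l‖
      have hB : ‖((bernoulli l : ℚ) : ℚ_[p])‖ ≤ 1 := by
        rcases Nat.lt_or_ge l 2 with hl2 | hl2
        · interval_cases l
          · simp [bernoulli_zero]
          · rw [bernoulli_one]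
            have h2 : ((( -1/2 : ℚ)) : ℚ_[p]) = -(((2 : ℤ) : ℚ_[p]))⁻¹ := by
              push_cast; ring
            rw [h2, norm_neg, norm_inv,
              aux_norm_int_eq_one p hp (by intro hd; have := Int.le_of_dvd (by norm_num) hd; omega : ¬ (p:ℤ) ∣ 2)]
            norm_num
        · rcases Nat.even_or_odd l with hle' | hlo
          · -- even, use IH
            have hIH := IH l hl hl2 (by omega) hle'
            have hrest : ‖((∑ m ∈ range p, (m : ℚ) ^ l : ℚ) : ℚ_[p]) / (p : ℚ_[p])‖ ≤ 1 := by
              obtain ⟨m, hm⟩ := aux_dvd_sum_pow p hp l (by omega)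
              have hcast : ((∑ m' ∈ range p, (m' : ℚ) ^ l : ℚ) : ℚ_[p])
                  = (p : ℚ_[p]) * ((m : ℤ) : ℚ_[p]) := by
                have := congrArg (fun z : ℤ => ((z : ℚ_[p]))) hm
                push_cast at this ⊢
                exact this
              rw [hcast, mul_comm, mul_div_assoc, div_self hppos, mul_one]
              exact Padic.norm_int_le_one m
            calc ‖((bernoulli l : ℚ) : ℚ_[p])‖
                = ‖(((bernoulli l : ℚ) : ℚ_[p])
                    - ((∑ m ∈ range p, (m : ℚ) ^ l : ℚ) : ℚ_[p]) / (p : ℚ_[p]))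
                    + ((∑ m ∈ range p, (m : ℚ) ^ l : ℚ) : ℚ_[p]) / (p : ℚ_[p])‖ := by
                  congr 1; ring
              _ ≤ max _ _ := IsUltrametricDist.norm_add_le_max _ _
              _ ≤ 1 := max_le (hIH.trans hpinv1) hrest
          · -- odd ≥ 3 : bernoulli l = 0
            have : bernoulli l = 0 := by
              rw [bernoulli_eq_bernoulli'_of_ne_one (by omega)]
              exact bernoulli'_eq_zero_of_odd hlo (by omega)
            simp [this]
      -- bound the whole term
      have hC : ‖(((i + 1).choose l : ℕ) : ℚ_[p])‖ ≤ 1 := by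
        have := Padic.norm_int_le_one (p := p) ((i + 1).choose l : ℤ)
        rwa [show ((((i + 1).choose l : ℤ)) : ℚ_[p]) = (((i + 1).choose l : ℕ) : ℚ_[p]) by
          push_cast; ring] at this
      have hpow : ‖(p : ℚ_[p]) ^ (i + 1 - l)‖ ≤ (p : ℝ)⁻¹ ^ 2 := by
        rw [norm_pow, Padic.norm_p]
        exact pow_le_pow_of_le_one (by positivity) hpinv1 (by omega)
      rw [ht]
      simp only []
      rw [norm_div, norm_mul, norm_mul, hni1, div_one]
      calc ‖((bernoulli l : ℚ) : ℚ_[p])‖ * ‖((i + 1).choose l : ℚ_[p])‖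
            * ‖(p : ℚ_[p]) ^ (i + 1 - l)‖
          ≤ 1 * 1 * ((p : ℝ)⁻¹ ^ 2) := by
            gcongr <;> first | exact hB | exact hC | exact hpow | positivity
        _ = (p : ℝ)⁻¹ ^ 2 := by ring
    calc ‖∑ l ∈ range i, t l‖ / (p : ℝ)⁻¹ ≤ ((p : ℝ)⁻¹ ^ 2) / (p : ℝ)⁻¹ := by
          gcongr
      _ = (p : ℝ)⁻¹ := by field_simp
  
end Aux


section Main

variable (p : ℕ)

/-- The Voronoi-type congruence `(2^k - 1) P_k ≡ k p O (mod p²)` in `ℤ`,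
where `k = q + 1`, `p = 2q + 1`, `P_k = ∑_{m<p} m^k`, `O = ∑_{b<q} (2b+1)^q`. -/
private lemma aux_voronoi (hp : p.Prime) (hp3 : 3 < p) :
    (p : ℤ) ^ 2 ∣ ((2 : ℤ) ^ (p / 2 + 1) - 1) * (∑ m ∈ range p, (m : ℤ) ^ (p / 2 + 1))
      - ((p / 2 : ℕ) + 1 : ℤ) * p * (∑ b ∈ range (p / 2), (2 * (b : ℤ) + 1) ^ (p / 2)) := by
  have hodd : p % 2 = 1 := Nat.odd_iff.mp (hp.odd_of_ne_two (by omega))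
  set q : ℕ := p / 2 with hq
  have hpq : p = 2 * q + 1 := by omega
  set k : ℕ := q + 1 with hk
  -- binomial sub-lemma
  have hbin : ∀ s : ℤ, (p : ℤ) ^ 2 ∣ (s + p) ^ k - s ^ k - ((q : ℤ) + 1) * p * s ^ q := by
    intro s
    have hsum : (s + (p : ℤ)) ^ k - s ^ k - ((q : ℤ) + 1) * p * s ^ q
        = ∑ j ∈ range q, s ^ j * (p : ℤ) ^ (k - j) * ((k).choose j) := by
      rw [hk, add_pow, sum_range_succ, sum_range_succ]
      have e1 : q + 1 - (q + 1) = 0 := by omega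
      have e2 : q + 1 - q = 1 := by omega
      rw [e1, e2, pow_zero, pow_one, Nat.choose_self, Nat.choose_succ_self_right]
      push_cast
      ring
    rw [hsum]
    apply dvd_sum
    intro j hj
    rw [mem_range] at hj
    have e3 : k - j = (q - 1 - j) + 2 := by omega
    exact ⟨s ^ j * (p : ℤ) ^ (q - 1 - j) * ((k).choose j), by rw [e3, pow_add]; ring⟩
  -- the identity 2^k P - P = ∑ ((2b+1+p)^k - (2b+1)^k)
  set P : ℤ := ∑ m ∈ range p, (m : ℤ) ^ k with hP
  have h1 : (2 : ℤ) ^ k * P = ∑ m ∈ range p, (2 * (m : ℤ)) ^ k := by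
    rw [hP, mul_sum]
    exact sum_congr rfl fun m _ => by rw [mul_pow]
  have h2 : ∑ m ∈ range p, (2 * (m : ℤ)) ^ k
      = (∑ i ∈ range (q + 1), (2 * (i : ℤ)) ^ k)
        + ∑ b ∈ range q, (2 * ((q + 1 + b : ℕ) : ℤ)) ^ k := by
    rw [show p = (q + 1) + q by omega, sum_range_add]
  have h3 : ∑ i ∈ range (q + 1), (2 * (i : ℤ)) ^ k = ∑ b ∈ range q, (2 * (b : ℤ) + 2) ^ k := by
    rw [sum_range_succ']
    push_cast
    rw [zero_pow (by omega : k ≠ 0), add_zero]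
    exact sum_congr rfl fun b _ => by ring
  have h4 : ∑ b ∈ range q, (2 * ((q + 1 + b : ℕ) : ℤ)) ^ k
      = ∑ b ∈ range q, ((2 * (b : ℤ) + 1) + p) ^ k := by
    refine sum_congr rfl fun b _ => ?_
    have : 2 * ((q + 1 + b : ℕ) : ℤ) = (2 * (b : ℤ) + 1) + p := by push_cast; omega
    rw [this]
  have h5 : P = ∑ b ∈ range q, ((2 * (b : ℤ) + 1) ^ k + (2 * (b : ℤ) + 2) ^ k) := by
    rw [hP, show p = 2 * q + 1 by omega,
      aux_sum_odd_even (fun m : ℕ => (m : ℤ) ^ k) q]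
    rw [Nat.cast_zero, zero_pow (by omega : k ≠ 0), zero_add]
    exact sum_congr rfl fun b _ => by push_cast; ring
  have hE : (2 : ℤ) ^ k * P - P - ((q : ℤ) + 1) * p
        * (∑ b ∈ range q, (2 * (b : ℤ) + 1) ^ q)
      = ∑ b ∈ range q, (((2 * (b : ℤ) + 1) + p) ^ k - (2 * (b : ℤ) + 1) ^ k
          - ((q : ℤ) + 1) * p * (2 * (b : ℤ) + 1) ^ q) := by
    rw [h1, h2, h3, h4, h5, mul_sum, ← sum_add_distrib, ← sum_sub_distrib, ← sum_sub_distrib]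
    exact sum_congr rfl fun b _ => by ring
  have hgoal : ((2 : ℤ) ^ k - 1) * P - ((q : ℕ) + 1 : ℤ) * p
        * (∑ b ∈ range q, (2 * (b : ℤ) + 1) ^ q)
      = (2 : ℤ) ^ k * P - P - ((q : ℤ) + 1) * p
        * (∑ b ∈ range q, (2 * (b : ℤ) + 1) ^ q) := by push_cast; ring
  rw [hgoal, hE]
  apply dvd_sum
  intro b _
  exact hbin (2 * (b : ℤ) + 1)

end Main

/-- **`B_{(p+1)/2} ≢ 0 (mod p)` for `p ≡ 3 (mod 4)`.**
For a prime `p > 3` with `p ≡ 3 (mod 4)`, the Bernoulli number `B_{(p+1)/2}` is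
`p`-integral and not divisible by `p`: its `p`-adic valuation is `0`. -/
theorem bernoulli_half_succ_padicValRat_eq_zero
    (p : ℕ) (hp : p.Prime) (hp3 : 3 < p) (hp4 : p % 4 = 3) :
    padicValRat p (bernoulli ((p + 1) / 2)) = 0 := by
  haveI := Fact.mk hp
  have hodd : p % 2 = 1 := Nat.odd_iff.mp (hp.odd_of_ne_two (by omega))
  set q : ℕ := p / 2 with hq
  set k : ℕ := q + 1 with hk
  have hhalf : (p + 1) / 2 = k := by omega
  rw [hhalf]
  -- Integers
  set P : ℤ := ∑ m ∈ range p, (m : ℤ) ^ k with hP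
  set O : ℤ := ∑ b ∈ range q, (2 * (b : ℤ) + 1) ^ q with hO
  set T : ℤ := ∑ b ∈ range q, (legendreSym p (2 * (b : ℤ) + 1)) with hT
  -- each 2b+1 is a unit mod p
  have hunit : ∀ b ∈ range q, ((2 * (b : ℤ) + 1 : ℤ) : ZMod p) ≠ 0 := by
    intro b hb
    rw [mem_range] at hb
    rw [Ne, ZMod.intCast_zmod_eq_zero_iff_dvd]
    intro hdvd
    have := Int.le_of_dvd (by positivity) hdvd
    omega
  -- O ≡ T mod p
  have hOT : ((O : ZMod p)) = ((T : ZMod p)) := by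
    rw [hO, hT]
    push_cast
    refine sum_congr rfl fun b _ => ?_
    rw [legendreSym.eq_pow]
    norm_cast
  -- T is odd
  have hqodd : q % 2 = 1 := by omega
  have hT2 : ((T : ZMod 2)) = 1 := by
    rw [hT]
    push_cast
    have : ∀ b ∈ range q, ((legendreSym p (2 * (b : ℤ) + 1) : ℤ) : ZMod 2) = 1 := by
      intro b hb
      rcases legendreSym.eq_one_or_neg_one p (hunit b hb) with h | h <;> rw [h] <;> decide
    rw [sum_congr rfl this, sum_const, card_range, nsmul_eq_mul, mul_one]
    obtain ⟨t, ht⟩ : ∃ t, q = 2 * t + 1 := ⟨q / 2, by omega⟩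
    rw [ht]
    push_cast
    rw [show ((2 : ZMod 2)) = 0 by decide]
    ring
  have hTne : T ≠ 0 := by
    intro h
    rw [h] at hT2
    simp at hT2
  have hTabs : |T| ≤ (q : ℤ) := by
    calc |T| ≤ ∑ b ∈ range q, |legendreSym p (2 * (b : ℤ) + 1)| := abs_sum_le_sum_abs _ _
      _ ≤ ∑ _b ∈ range q, 1 := by
          refine sum_le_sum fun b hb => ?_
          rcases legendreSym.eq_one_or_neg_one p (hunit b hb) with h | h <;> rw [h] <;> decide
      _ = (q : ℤ) := by rw [sum_const, card_range]; ring
  have hpT : ¬ (p : ℤ) ∣ T := by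
    intro h
    have h1 : (p : ℤ) ∣ |T| := (dvd_abs _ _).mpr h
    have h2 : (p : ℤ) ≤ |T| := Int.le_of_dvd (abs_pos.mpr hTne) h1
    have h3 : (q : ℤ) < (p : ℤ) := by exact_mod_cast (by omega : q < p)
    omega
  have hpO : ¬ (p : ℤ) ∣ O := by
    intro h
    rw [← ZMod.intCast_zmod_eq_zero_iff_dvd, hOT, ZMod.intCast_zmod_eq_zero_iff_dvd] at h
    exact hpT h
  -- 2^k - 1 is a unit mod p
  have h2k : ¬ (p : ℤ) ∣ ((2 : ℤ) ^ k - 1) := by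
    intro h
    rw [← ZMod.intCast_zmod_eq_zero_iff_dvd] at h
    push_cast at h
    have h2ne : ((2 : ZMod p)) ≠ 0 := by
      intro h2
      rw [show ((2 : ZMod p)) = ((2 : ℕ) : ZMod p) by push_cast; ring,
        ZMod.natCast_eq_zero_iff] at h2
      have := Nat.le_of_dvd (by norm_num) h2
      omega
    have hfer : ((2 : ZMod p)) ^ (p - 1) = 1 := ZMod.pow_card_sub_one_eq_one h2ne
    have hsq : (((2 : ZMod p)) ^ q) * (((2 : ZMod p)) ^ q) = 1 := by
      rw [← pow_add, show q + q = p - 1 by omega]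
      exact hfer
    have h3ne : ((3 : ZMod p)) ≠ 0 := by
      intro h3
      rw [show ((3 : ZMod p)) = ((3 : ℕ) : ZMod p) by push_cast; ring,
        ZMod.natCast_eq_zero_iff] at h3
      have := Nat.le_of_dvd (by norm_num) h3
      omega
    rcases mul_self_eq_one_iff.mp hsq with hcase | hcase
    · rw [hk, pow_succ, hcase, one_mul] at h
      -- 2 - 1 = 0 ⇒ 1 = 0
      have : ((1 : ZMod p)) = 0 := by rw [← h]; ring
      exact one_ne_zero this
    · rw [hk, pow_succ, hcase] at h
      have : ((3 : ZMod p)) = 0 := by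
        have : ((-1 : ZMod p)) * 2 - 1 = -3 := by ring
        rw [this] at h
        linear_combination -h
      exact h3ne this
  -- Voronoi
  obtain ⟨M, hM⟩ := aux_voronoi p hp hp3
  rw [← hq] at hM
  have hkz : ((q : ℤ) + 1) = ((k : ℕ) : ℤ) := by rw [hk]; push_cast; ring
  rw [show q + 1 = k from hk.symm, hkz, ← hP, ← hO] at hM
  -- Norm computations in ℚ_[p]
  have hp0 : (0:ℝ) < p := by positivity
  have hpinv1 : (p : ℝ)⁻¹ < 1 := by
    rw [inv_lt_one_iff₀]
    right
    exact_mod_cast hp.one_lt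
  have hppos : ((p : ℚ_[p])) ≠ 0 := Nat.cast_ne_zero.2 hp.ne_zero
  set x : ℚ_[p] := ((bernoulli k : ℚ) : ℚ_[p]) with hx
  have hkeven : Even k := Nat.even_iff.mpr (by omega)
  have happrox := aux_bernoulli_approx p hp hp3 k (by omega) (by omega) hkeven
  have hPcast : ((∑ m ∈ range p, (m : ℚ) ^ k : ℚ) : ℚ_[p]) = ((P : ℤ) : ℚ_[p]) := by
    rw [hP]; push_cast; ring
  rw [hPcast] at happrox
  set u : ℚ_[p] := (((2 : ℤ) ^ k - 1 : ℤ) : ℚ_[p]) with hu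
  have hnu : ‖u‖ = 1 := aux_norm_int_eq_one p hp h2k
  have hnkO : ‖((((k : ℤ)) * O : ℤ) : ℚ_[p])‖ = 1 := by
    apply aux_norm_int_eq_one p hp
    intro h
    rcases (Int.Prime.dvd_mul' hp h) with h' | h'
    · rw [Int.natCast_dvd_natCast] at h'
      have := Nat.le_of_dvd (by omega) h'
      omega
    · exact hpO h'
  -- the key decomposition
  have hMcast : u * ((P : ℤ) : ℚ_[p])
      = ((k : ℚ_[p])) * (p : ℚ_[p]) * ((O : ℤ) : ℚ_[p]) + (p : ℚ_[p]) ^ 2 * ((M : ℤ) : ℚ_[p]) := by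
    have := congrArg (fun z : ℤ => ((z : ℚ_[p]))) hM
    push_cast at this
    rw [hu]
    push_cast
    linear_combination this
  have hdiff : u * x - (((k : ℤ) * O : ℤ) : ℚ_[p])
      = u * (x - ((P : ℤ) : ℚ_[p]) / (p : ℚ_[p])) + (p : ℚ_[p]) * ((M : ℤ) : ℚ_[p]) := by
    push_cast
    field_simp
    push_cast at hMcast
    linear_combination hMcast
  have hnd : ‖u * x - (((k : ℤ) * O : ℤ) : ℚ_[p])‖ ≤ (p : ℝ)⁻¹ := by
    rw [hdiff]
    refine le_trans (IsUltrametricDist.norm_add_le_max _ _) (max_le ?_ ?_)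
    · rw [norm_mul, hnu, one_mul]
      exact happrox
    · rw [norm_mul, Padic.norm_p]
      calc (p : ℝ)⁻¹ * ‖((M : ℤ) : ℚ_[p])‖ ≤ (p : ℝ)⁻¹ * 1 := by
            gcongr
            exact Padic.norm_int_le_one M
        _ = (p : ℝ)⁻¹ := by ring
  have hux : ‖u * x‖ = 1 := by
    have hne : ‖(((k : ℤ) * O : ℤ) : ℚ_[p])‖
        ≠ ‖u * x - (((k : ℤ) * O : ℤ) : ℚ_[p])‖ := by
      rw [hnkO]
      intro h
      rw [← h] at hnd
      linarith
    calc ‖u * x‖ = ‖(((k : ℤ) * O : ℤ) : ℚ_[p]) + (u * x - (((k : ℤ) * O : ℤ) : ℚ_[p]))‖ := by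
          congr 1; ring
      _ = max ‖(((k : ℤ) * O : ℤ) : ℚ_[p])‖ ‖u * x - (((k : ℤ) * O : ℤ) : ℚ_[p])‖ :=
          IsUltrametricDist.norm_add_eq_max_of_norm_ne_norm hne
      _ = 1 := by
          rw [hnkO]
          exact max_eq_left (le_trans hnd hpinv1.le)
  have hxnorm : ‖x‖ = 1 := by
    rw [norm_mul, hnu, one_mul] at hux
    exact hux
  -- conclude
  have hb1 : padicNorm p (bernoulli k) = 1 := by
    have := Padic.eq_padicNorm (p := p) (bernoulli k)
    rw [← hx, hxnorm] at this
    exact_mod_cast this.symm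
  have hbne : bernoulli k ≠ 0 := by
    intro h
    rw [h] at hb1
    simp [padicNorm] at hb1
  rw [padicNorm.eq_zpow_of_nonzero hbne] at hb1
  have hinj := zpow_right_injective₀ (a := (p : ℚ)) (by exact_mod_cast hp.pos)
    (by exact_mod_cast hp.one_lt.ne')
  have h0 : ((p : ℚ)) ^ (-padicValRat p (bernoulli k)) = ((p : ℚ)) ^ (0 : ℤ) := by
    rw [hb1, zpow_zero]
  have := hinj h0
  omega
end

section
/- Let p be a prime with p > 3 and p ≡ 3 (mod 4), let χ(a) = legendreSym p a be the Legendre symbol mod p (the Dirichlet character of the imaginary quadratic field K = ℚ(√−p) of discriminant −p), and set n = (p−1)/2. Let β := p^{n−1} · Σ_{a=1}^{p−1} χ(a) · B_n(a/p) be the generalized Bernoulli number B_{n,χ}, where B_n(x) is the n-th Bernoulli polynomial. Then p·β ≡ −1 (mod p); that is, the rational number p·β + 1 is either 0 or has p-adic valuation padicValRat p (p·β + 1) ≥ 1. -/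
open Finset

section Aux

variable {p : ℕ} [hpF : Fact p.Prime]

private lemma auxP_add {c : ℤ} {x y : ℚ}
    (hx : x = 0 ∨ c ≤ padicValRat p x) (hy : y = 0 ∨ c ≤ padicValRat p y) :
    x + y = 0 ∨ c ≤ padicValRat p (x + y) := by
  rcases hx with hx | hx
  · rw [hx, zero_add]; exact hy
  rcases hy with hy | hy
  · rw [hy, add_zero]; exact Or.inr hx
  by_cases h : x + y = 0
  · exact Or.inl h
  · exact Or.inr (le_trans (le_min hx hy) (padicValRat.min_le_padicValRat_add h))

private lemma auxP_sum {c : ℤ} {ι : Type*} {s : Finset ι} {F : ι → ℚ}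
    (h : ∀ i ∈ s, F i = 0 ∨ c ≤ padicValRat p (F i)) :
    (∑ i ∈ s, F i) = 0 ∨ c ≤ padicValRat p (∑ i ∈ s, F i) := by
  classical
  induction s using Finset.induction with
  | empty => simp
  | @insert _ _ hi ih =>
    rw [Finset.sum_insert hi]
    exact auxP_add (h _ (mem_insert_self _ _))
      (ih fun i hi' => h i (mem_insert_of_mem hi'))

private lemma aux_int_val_nonneg (z : ℤ) : 0 ≤ padicValRat p (z : ℚ) := by
  rw [padicValRat.of_int]
  exact Int.natCast_nonneg _

private lemma aux_nat_val_nonneg (n : ℕ) : 0 ≤ padicValRat p (n : ℚ) := by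
  have : ((n : ℤ) : ℚ) = (n : ℚ) := by push_cast; ring
  rw [← this]; exact aux_int_val_nonneg _

private lemma aux_nat_val_zero {n : ℕ} (h : ¬ p ∣ n) : padicValRat p (n : ℚ) = 0 := by
  rw [padicValRat.of_nat, padicValNat.eq_zero_of_not_dvd h]
  simp

/-- p-integrality of Bernoulli numbers below p-1. -/
private lemma aux_bernoulli_val : ∀ i : ℕ, i < p - 1 →
    bernoulli i = 0 ∨ 0 ≤ padicValRat p (bernoulli i) := by
  intro i
  induction i using Nat.strong_induction_on with
  | _ i ih =>
    intro hi
    have hp2 : 2 ≤ p := hpF.out.two_le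
    rcases Nat.eq_zero_or_pos i with rfl | hi0
    · right; simp
    have hs := sum_bernoulli (i + 1)
    rw [if_neg (by omega), Finset.sum_range_succ, Nat.choose_succ_self_right] at hs
    set S := ∑ k ∈ range i, (((i + 1).choose k : ℚ)) * bernoulli k with hS
    have hi1 : ((i : ℚ) + 1) ≠ 0 := by positivity
    have hB : bernoulli i = -S / ((i : ℚ) + 1) := by
      field_simp
      push_cast at hs ⊢
      linarith
    by_cases hS0 : S = 0
    · left; rw [hB, hS0]; simp
    · right
      have hterms : ∀ k ∈ range i, (((i + 1).choose k : ℚ)) * bernoulli k = 0 ∨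
          (0 : ℤ) ≤ padicValRat p ((((i + 1).choose k : ℚ)) * bernoulli k) := by
        intro k hk
        rw [Finset.mem_range] at hk
        by_cases hbkz : bernoulli k = 0
        · left; rw [hbkz, mul_zero]
        rcases ih k (by omega) (by omega) with hbk | hbk
        · exact absurd hbk hbkz
        right
        have hc : (((i + 1).choose k : ℚ)) ≠ 0 := by
          have := Nat.choose_pos (show k ≤ i + 1 by omega)
          positivity
        rw [padicValRat.mul hc hbkz]
        have := aux_nat_val_nonneg (p := p) ((i + 1).choose k)
        linarith
      have hvalS : 0 ≤ padicValRat p S := by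
        rcases auxP_sum (p := p) (c := 0) hterms with h0 | h0
        · exact absurd h0 hS0
        · exact h0
      have hvi : padicValRat p ((i : ℚ) + 1) = 0 := by
        have : ((i : ℚ) + 1) = ((i + 1 : ℕ) : ℚ) := by push_cast; ring
        rw [this]
        exact aux_nat_val_zero (by
          intro hdvd
          have := Nat.le_of_dvd (by omega) hdvd
          omega)
      rw [hB, padicValRat.div (by simpa using hS0) hi1, padicValRat.neg, hvi]
      linarith

end Aux

/-- **von Staudt–Clausen for `B_{(p−1)/2, χ_K}`, `K = ℚ(√−p)`.**
For a prime `p > 3` with `p ≡ 3 (mod 4)`, let `χ = legendreSym p` and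
`β = p^{n−1} Σ_{a=1}^{p−1} χ(a) B_n(a/p)` with `n = (p−1)/2` (the generalized
Bernoulli number `B_{(p−1)/2,χ_K}`). Then `p·β ≡ −1 (mod p)`. -/
theorem mul_genBernoulli_legendre_congruent_neg_one
    (p : ℕ) [hpF : Fact p.Prime] (hp3 : 3 < p) (hp4 : p % 4 = 3)
    (β : ℚ)
    (hβ : β = (p : ℚ) ^ ((p - 1) / 2 - 1) *
      ∑ a ∈ Finset.Icc 1 (p - 1), (legendreSym p a : ℚ) *
        (Polynomial.bernoulli ((p - 1) / 2)).eval ((a : ℚ) / p)) :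
    (p : ℚ) * β + 1 = 0 ∨ 1 ≤ padicValRat p ((p : ℚ) * β + 1) := by
  have hp : p.Prime := hpF.out
  have hp5 : 5 ≤ p := by omega
  set n : ℕ := (p - 1) / 2 with hn
  have hn2 : 2 ≤ n := by omega
  have hpQ : (p : ℚ) ≠ 0 := by positivity
  -- Step 1: expand p^n * B_n(a/p)
  have hexp : ∀ a : ℕ, (p : ℚ) ^ n * (Polynomial.bernoulli n).eval ((a : ℚ) / p)
      = ∑ i ∈ range (n + 1),
          bernoulli i * (n.choose i : ℚ) * (a : ℚ) ^ (n - i) * (p : ℚ) ^ i := by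
    intro a
    rw [Polynomial.bernoulli, Polynomial.eval_finset_sum, mul_sum]
    refine Finset.sum_congr rfl fun i hi => ?_
    rw [Finset.mem_range] at hi
    rw [Polynomial.eval_monomial, div_pow]
    rw [show (p : ℚ) ^ n = (p : ℚ) ^ i * (p : ℚ) ^ (n - i) by
      rw [← pow_add]; congr 1; omega]
    field_simp
  -- Step 2: p*β + 1 as structured sum
  have key : (p : ℚ) * β + 1 =
      (∑ a ∈ Finset.Icc 1 (p - 1),
        (((legendreSym p a : ℚ) * (a : ℚ) ^ n - 1) +
          ∑ i ∈ range n, (legendreSym p a : ℚ) *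
            (bernoulli (i + 1) * (n.choose (i + 1) : ℚ) * (a : ℚ) ^ (n - (i + 1))
              * (p : ℚ) ^ (i + 1)))) + (p : ℚ) := by
    have hpow : (p : ℚ) * (p : ℚ) ^ (n - 1) = (p : ℚ) ^ n := by
      rw [← pow_succ']
      congr 1
      omega
    rw [hβ, ← mul_assoc, hpow, mul_sum]
    have hterm : ∀ a ∈ Finset.Icc 1 (p - 1),
        (p : ℚ) ^ n * ((legendreSym p a : ℚ) * (Polynomial.bernoulli n).eval ((a : ℚ) / p))
        = (legendreSym p a : ℚ) * (a : ℚ) ^ n +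
          ∑ i ∈ range n, (legendreSym p a : ℚ) *
            (bernoulli (i + 1) * (n.choose (i + 1) : ℚ) * (a : ℚ) ^ (n - (i + 1))
              * (p : ℚ) ^ (i + 1)) := by
      intro a _
      rw [mul_left_comm, hexp a, mul_sum, Finset.sum_range_succ', add_comm]
      congr 1
      simp
    rw [Finset.sum_congr rfl hterm, Finset.sum_add_distrib, Finset.sum_add_distrib,
      Finset.sum_sub_distrib, Finset.sum_const, Nat.card_Icc]
    have : (((p - 1 + 1 - 1 : ℕ)) : ℚ) = (p : ℚ) - 1 := by
      have : p - 1 + 1 - 1 = p - 1 := by omega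
      rw [this]
      push_cast [Nat.cast_sub (by omega : 1 ≤ p)]
      ring
    rw [nsmul_eq_mul, this]
    ring
  rw [key]
  -- Step 3: valuation bounds
  refine auxP_add (auxP_sum fun a ha => ?_) (Or.inr (by rw [padicValRat.self hp.one_lt]))
  rw [Finset.mem_Icc] at ha
  have hpa : ¬ p ∣ a := by
    intro hdvd
    rcases Nat.eq_zero_of_dvd_of_lt hdvd (by omega) with h
    omega
  have haZ : ((a : ZMod p)) ≠ 0 := by
    rw [Ne, ZMod.natCast_eq_zero_iff]
    exact hpa
  have hleg : legendreSym p (a : ℤ) = 1 ∨ legendreSym p (a : ℤ) = -1 := by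
    rcases legendreSym.eq_one_or_neg_one p (a := (a : ℤ)) (by exact_mod_cast haZ) with h | h
    · exact Or.inl h
    · exact Or.inr h
  have hlegQ : (legendreSym p (a : ℤ) : ℚ) = 1 ∨ (legendreSym p (a : ℤ) : ℚ) = -1 := by
    rcases hleg with h | h <;> [left; right] <;> rw [h] <;> norm_num
  have hlegval : padicValRat p ((legendreSym p (a : ℤ) : ℚ)) = 0 := by
    rcases hlegQ with h | h <;> rw [h] <;> simp [padicValRat.neg]
  have hleg0 : ((legendreSym p (a : ℤ) : ℚ)) ≠ 0 := by
    rcases hlegQ with h | h <;> rw [h] <;> norm_num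
  refine auxP_add ?_ (auxP_sum fun i hi => ?_)
  · -- Euler's criterion term
    set m : ℤ := legendreSym p (a : ℤ) * (a : ℤ) ^ n - 1 with hm
    have hcast : (legendreSym p (a : ℤ) : ℚ) * (a : ℚ) ^ n - 1 = ((m : ℤ) : ℚ) := by
      push_cast [hm]; ring
    have hdvd : (p : ℤ) ∣ m := by
      have hl := legendreSym.eq_pow p (a : ℤ)
      push_cast at hl
      rw [← ZMod.intCast_zmod_eq_zero_iff_dvd, hm]
      push_cast
      rw [hl, ← pow_add, show p / 2 + n = p - 1 by omega,
        ZMod.pow_card_sub_one_eq_one haZ, sub_self]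
    rw [hcast]
    rcases eq_or_ne m 0 with h0 | h0
    · left; rw [h0]; simp
    · right
      obtain ⟨k, hk⟩ := hdvd
      have hk0 : (k : ℚ) ≠ 0 := by
        intro h
        apply h0
        rw [hk, show k = 0 from by exact_mod_cast h, mul_zero]
      have : ((m : ℤ) : ℚ) = (p : ℚ) * (k : ℚ) := by rw [hk]; push_cast; ring
      rw [this, padicValRat.mul hpQ hk0, padicValRat.self hp.one_lt]
      have := aux_int_val_nonneg (p := p) k
      linarith
  · -- higher terms with p^(i+1)
    rw [Finset.mem_range] at hi
    by_cases hb : bernoulli (i + 1) = 0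
    · left; rw [hb]; ring
    · right
      have hbval : 0 ≤ padicValRat p (bernoulli (i + 1)) := by
        rcases aux_bernoulli_val (p := p) (i + 1) (by omega) with h | h
        · exact absurd h hb
        · exact h
      have hc0 : ((n.choose (i + 1) : ℚ)) ≠ 0 := by
        have := Nat.choose_pos (show i + 1 ≤ n by omega)
        positivity
      have ha0 : ((a : ℚ)) ^ (n - (i + 1)) ≠ 0 := by
        have : (a : ℚ) ≠ 0 := by
          have : 0 < a := by omega
          positivity
        positivity
      have hp0 : ((p : ℚ)) ^ (i + 1) ≠ 0 := by positivity
      have ha0' : ((a : ℚ)) ≠ 0 := by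
        have : 0 < a := by omega
        positivity
      have hprod : bernoulli (i + 1) * (n.choose (i + 1) : ℚ) * (a : ℚ) ^ (n - (i + 1))
          * (p : ℚ) ^ (i + 1) ≠ 0 :=
        mul_ne_zero (mul_ne_zero (mul_ne_zero hb hc0) ha0) hp0
      rw [padicValRat.mul hleg0 hprod, hlegval,
        padicValRat.mul (mul_ne_zero (mul_ne_zero hb hc0) ha0) hp0,
        padicValRat.mul (mul_ne_zero hb hc0) ha0,
        padicValRat.mul hb hc0,
        padicValRat.pow (p : ℚ), padicValRat.pow (a : ℚ),
        padicValRat.self hp.one_lt]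
      have h1 : 0 ≤ padicValRat p ((a : ℚ)) := aux_nat_val_nonneg a
      have h2 : 0 ≤ padicValRat p ((n.choose (i + 1) : ℚ)) := aux_nat_val_nonneg _
      have h3 : 0 ≤ ((n - (i + 1) : ℕ) : ℤ) * padicValRat p ((a : ℚ)) :=
        mul_nonneg (Int.natCast_nonneg _) h1
      have h4 : (1 : ℤ) ≤ ((i + 1 : ℕ) : ℤ) := by exact_mod_cast Nat.one_le_iff_ne_zero.mpr (Nat.succ_ne_zero i)
      linarith
end

section
/- Let q be a prime with q ≡ 3 (mod 4) and write χ(a) = legendreSym q a (the Dirichlet character of the imaginary quadratic field K = ℚ(√−q)). Let p be an odd prime and N a positive integer with p ∤ N and χ(N) ≠ 1 (i.e. χ_K(N) = 0 or −1). Then p divides the integer Σ_{d ∣ N, d > 0} (χ(d) + χ(−(N/d))) · d^{p−1}. Since this sum equals a_{D_K}(N) · G_K(p−1; N) with normalizing factor a_{D_K}(N) = 1 + χ(−N) ∈ {1, 2} prime to p, this is the congruence G_K(p−1; N) ≡ 0 (mod p). -/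
lemma legendre_sum_zero (q : ℕ) [hqF : Fact q.Prime] (hq4 : q % 4 = 3) (N : ℕ) :
    ∑ d ∈ N.divisors, ((legendreSym q d : ℤ) + legendreSym q (-((N / d : ℕ) : ℤ))) = 0 := by
  have hq2 : q ≠ 2 := by omega
  have hneg1 : legendreSym q (-1) = -1 := by
    rw [legendreSym.at_neg_one hq2, ZMod.χ₄_nat_eq_if_mod_four, hq4]
    norm_num
    omega
  have hsplit : ∀ d ∈ N.divisors,
      (legendreSym q d : ℤ) + legendreSym q (-((N / d : ℕ) : ℤ)) =
      (legendreSym q d : ℤ) - legendreSym q ((N / d : ℕ) : ℤ) := by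
    intro d _
    have : (-((N / d : ℕ) : ℤ)) = (-1) * ((N / d : ℕ) : ℤ) := by ring
    rw [this, legendreSym.mul, hneg1]
    push_cast
    ring
  rw [Finset.sum_congr rfl hsplit, Finset.sum_sub_distrib]
  have := Nat.sum_div_divisors N (fun d => (legendreSym q d : ℤ))
  simp only [this]
  ring

/-- **`G_K(p−1;N) ≡ 0 (mod p)` for `K = ℚ(√−q)`, `q ≡ 3 (mod 4)`.**
Let `q ≡ 3 (mod 4)` be prime with character `χ = legendreSym q`, and let `p` be an
odd prime and `N > 0` with `p ∤ N` and `χ(N) ≠ 1`. Then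
`p ∣ Σ_{0<d∣N} (χ(d) + χ(−N/d)) d^{p−1}`, i.e. `G_K(p−1;N) ≡ 0 (mod p)`. -/
theorem legendre_divisor_sum_congruent_zero
    (q : ℕ) [hqF : Fact q.Prime] (hq4 : q % 4 = 3)
    (p : ℕ) (hp : p.Prime) (hpodd : Odd p)
    (N : ℕ) (hN : 0 < N) (hpN : ¬ p ∣ N) (hχN : legendreSym q N ≠ 1) :
    (p : ℤ) ∣ ∑ d ∈ N.divisors,
      (legendreSym q d + legendreSym q (-((N / d : ℕ) : ℤ))) * (d : ℤ) ^ (p - 1) := by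
  haveI : Fact p.Prime := ⟨hp⟩
  rw [← ZMod.intCast_zmod_eq_zero_iff_dvd]
  push_cast
  have hpow : ∀ d ∈ N.divisors, ((d : ZMod p))^(p-1) = 1 := by
    intro d hd
    apply ZMod.pow_card_sub_one_eq_one
    rw [Ne, ZMod.natCast_eq_zero_iff]
    intro h
    exact hpN (h.trans (Nat.dvd_of_mem_divisors hd))
  calc (∑ d ∈ N.divisors, ((legendreSym q d : ZMod p) +
          (legendreSym q (-((N / d : ℕ) : ℤ)) : ZMod p)) * (d : ZMod p) ^ (p - 1))
      = ∑ d ∈ N.divisors, ((legendreSym q d : ZMod p) +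
          (legendreSym q (-((N / d : ℕ) : ℤ)) : ZMod p)) := by
        refine Finset.sum_congr rfl fun d hd => ?_
        rw [hpow d hd, mul_one]
    _ = ((∑ d ∈ N.divisors, ((legendreSym q d : ℤ) +
          legendreSym q (-((N / d : ℕ) : ℤ)))) : ℤ) := by push_cast; ring
    _ = 0 := by rw [legendre_sum_zero q hq4 N]; simp
end

section
/- Let q be an odd prime, χ(a) = legendreSym q a the Legendre symbol mod q, s ≥ 0 an integer, and N a positive integer. Write β = v_q(N) for the q-adic valuation of N and N₂ = N / q^β. Then the following product formula holds: Σ_{d ∣ N, d>0} (χ(d) + χ(−(N/d))) · d^s = ( ∏_{ℓ prime, ℓ ∣ N₂} Σ_{t=0}^{v_ℓ(N)} χ(ℓ)^t · ℓ^{s·t} ) · ( 1 + χ(−N₂) · q^{s·β} ). -/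
open Finset ArithmeticFunction

private lemma sum_divisors_coprime_mul {R : Type*} [AddCommMonoid R] {m n : ℕ}
    (h : m.Coprime n) (f : ℕ → R) :
    ∑ d ∈ (m * n).divisors, f d = ∑ a ∈ m.divisors, ∑ b ∈ n.divisors, f (a * b) := by
  rcases eq_or_ne m 0 with rfl | hm
  · simp
  rcases eq_or_ne n 0 with rfl | hn
  · simp
  rw [← Finset.sum_product']
  refine Finset.sum_nbij' (i := fun d => (Nat.gcd d m, Nat.gcd d n))
    (j := fun p : ℕ × ℕ => p.1 * p.2) ?_ ?_ ?_ ?_ ?_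
  · intro d hd
    rw [Nat.mem_divisors] at hd
    simp only [Finset.mem_product, Nat.mem_divisors]
    exact ⟨⟨Nat.gcd_dvd_right _ _, hm⟩, ⟨Nat.gcd_dvd_right _ _, hn⟩⟩
  · intro p hp
    simp only [Finset.mem_product, Nat.mem_divisors] at hp
    exact Nat.mem_divisors.mpr ⟨mul_dvd_mul hp.1.1 hp.2.1, mul_ne_zero hm hn⟩
  · intro d hd
    rw [Nat.mem_divisors] at hd
    exact (Nat.gcd_mul_gcd_eq_iff_dvd_mul_of_coprime h).mpr hd.1
  · intro p hp
    simp only [Finset.mem_product, Nat.mem_divisors] at hp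
    have hbm : Nat.Coprime p.2 m := ((h.coprime_dvd_right hp.2.1)).symm
    have han : Nat.Coprime p.1 n := h.coprime_dvd_left hp.1.1
    have h1 : Nat.gcd (p.1 * p.2) m = p.1 := by
      rw [Nat.Coprime.gcd_mul_right_cancel p.1 hbm, Nat.gcd_eq_left hp.1.1]
    have h2 : Nat.gcd (p.1 * p.2) n = p.2 := by
      rw [Nat.Coprime.gcd_mul_left_cancel p.2 han, Nat.gcd_eq_left hp.2.1]
    simp [h1, h2]
  · intro d hd
    rw [Nat.mem_divisors] at hd
    rw [(Nat.gcd_mul_gcd_eq_iff_dvd_mul_of_coprime h).mpr hd.1]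


private lemma legendreSym_pow (q : ℕ) [Fact q.Prime] (a : ℤ) (t : ℕ) :
    legendreSym q (a ^ t) = legendreSym q a ^ t := by
  induction t with
  | zero => simp [legendreSym.at_one]
  | succ t ih => rw [pow_succ, pow_succ, legendreSym.mul, ih]

private def legGeom (q s : ℕ) [Fact q.Prime] : ArithmeticFunction ℤ :=
  ⟨fun d => legendreSym q (d : ℤ) * (d : ℤ) ^ s, by simp [legendreSym.at_zero]⟩

private lemma legGeom_apply (q s : ℕ) [Fact q.Prime] (d : ℕ) :
    legGeom q s d = legendreSym q (d : ℤ) * (d : ℤ) ^ s := rfl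

private lemma legGeom_isMult (q s : ℕ) [Fact q.Prime] : (legGeom q s).IsMultiplicative := by
  refine ⟨?_, fun {m n} _ => ?_⟩
  · simp [legGeom_apply, legendreSym.at_one]
  · simp only [legGeom_apply, Nat.cast_mul, legendreSym.mul, mul_pow]
    ring

private lemma sum_legGeom (q s : ℕ) [Fact q.Prime] {n : ℕ} (hn : n ≠ 0) :
    ∑ d ∈ n.divisors, legendreSym q (d : ℤ) * (d : ℤ) ^ s
      = ∏ ℓ ∈ n.primeFactors, ∑ t ∈ Finset.range (n.factorization ℓ + 1),
          (legendreSym q (ℓ : ℤ)) ^ t * (ℓ : ℤ) ^ (s * t) := by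
  have h1 : ∑ d ∈ n.divisors, legendreSym q (d : ℤ) * (d : ℤ) ^ s
      = (legGeom q s * (zeta : ArithmeticFunction ℤ)) n := by
    rw [coe_mul_zeta_apply]; rfl
  rw [h1, ((legGeom_isMult q s).mul isMultiplicative_zeta.natCast).multiplicative_factorization _
    hn, Finsupp.prod, Nat.support_factorization]
  refine Finset.prod_congr rfl fun ℓ hℓ => ?_
  have hℓp : ℓ.Prime := Nat.prime_of_mem_primeFactors hℓ
  rw [coe_mul_zeta_apply, Nat.sum_divisors_prime_pow hℓp]
  refine Finset.sum_congr rfl fun t _ => ?_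
  rw [legGeom_apply]
  push_cast
  rw [legendreSym_pow, ← pow_mul, mul_comm t s]

/-- **Product formula for the divisor sum defining `G_K(s;N)` (prime discriminant case).**
Let `q` be an odd prime with Legendre symbol `χ = legendreSym q`, `s ≥ 0`, and `N > 0`.
Writing `β = v_q(N)` and `N₂ = N / q^β`, one has
`Σ_{0<d∣N} (χ(d) + χ(−N/d)) d^s
  = (∏_{ℓ ∣ N₂ prime} Σ_{t=0}^{v_ℓ(N)} χ(ℓ)^t ℓ^{st}) · (1 + χ(−N₂) q^{sβ})`. -/
theorem legendre_divisor_sum_product_formula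
    (q : ℕ) [hqF : Fact q.Prime] (hqodd : Odd q)
    (s : ℕ) (N : ℕ) (hN : 0 < N) :
    ∑ d ∈ N.divisors,
        (legendreSym q d + legendreSym q (-((N / d : ℕ) : ℤ))) * (d : ℤ) ^ s
      = (∏ ℓ ∈ (N / q ^ (N.factorization q)).primeFactors,
          ∑ t ∈ Finset.range (N.factorization ℓ + 1),
            (legendreSym q ℓ) ^ t * (ℓ : ℤ) ^ (s * t)) *
        (1 + legendreSym q (-((N / q ^ (N.factorization q) : ℕ) : ℤ)) *
          (q : ℤ) ^ (s * N.factorization q)) := by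
  have hq := hqF.out
  set β := N.factorization q with hβ
  set N₂ := N / q ^ β with hN₂def
  have hNfac : q ^ β * N₂ = N := Nat.ordProj_mul_ordCompl_eq_self N q
  have hqN₂ : ¬ q ∣ N₂ := Nat.not_dvd_ordCompl hq hN.ne'
  have hN₂0 : N₂ ≠ 0 := (Nat.ordCompl_pos q hN.ne').ne'
  have hcop : (q ^ β).Coprime N₂ :=
    Nat.Coprime.pow_left _ ((Nat.Prime.coprime_iff_not_dvd hq).mpr hqN₂)
  have hχq : legendreSym q (q : ℤ) = 0 := by
    rw [legendreSym.eq_zero_iff]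
    exact_mod_cast ZMod.natCast_self q
  -- χ(N₂/d) = χ(N₂) χ(d) for d ∣ N₂
  have hsq : ∀ d : ℕ, d ∣ N₂ →
      legendreSym q ((N₂ / d : ℕ) : ℤ) = legendreSym q (N₂ : ℤ) * legendreSym q (d : ℤ) := by
    intro d hd
    obtain ⟨e, he⟩ := hd
    have hd0 : d ≠ 0 := by rintro rfl; exact hN₂0 (by simpa using he)
    have hde : N₂ / d = e := by rw [he, Nat.mul_div_cancel_left _ (Nat.pos_of_ne_zero hd0)]
    have hdsq : legendreSym q (d : ℤ) ^ 2 = 1 := by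
      apply legendreSym.sq_one
      rw [Int.cast_natCast, Ne, ZMod.natCast_eq_zero_iff]
      exact fun h => hqN₂ (h.trans (Dvd.intro e he.symm))
    have := congrArg (fun x : ℤ => legendreSym q x) (by exact_mod_cast congrArg (Nat.cast : ℕ → ℤ) he : (N₂ : ℤ) = (d : ℤ) * (e : ℤ))
    simp only [legendreSym.mul] at this
    rw [hde]
    have : legendreSym q (N₂ : ℤ) * legendreSym q (d : ℤ)
        = legendreSym q (d : ℤ) ^ 2 * legendreSym q (e : ℤ) := by rw [this]; ring
    rw [this, hdsq, one_mul]
  -- split LHS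
  have hsplit : ∑ d ∈ N.divisors,
      (legendreSym q d + legendreSym q (-((N / d : ℕ) : ℤ))) * (d : ℤ) ^ s
      = (∑ d ∈ N.divisors, legendreSym q (d : ℤ) * (d : ℤ) ^ s)
        + ∑ d ∈ N.divisors, legendreSym q (-((N / d : ℕ) : ℤ)) * (d : ℤ) ^ s := by
    rw [← Finset.sum_add_distrib]
    exact Finset.sum_congr rfl fun d _ => by ring
  -- Term 1
  have hT1 : ∑ d ∈ N.divisors, legendreSym q (d : ℤ) * (d : ℤ) ^ s
      = ∑ b ∈ N₂.divisors, legendreSym q (b : ℤ) * (b : ℤ) ^ s := by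
    conv_lhs => rw [← hNfac]
    rw [sum_divisors_coprime_mul hcop, Nat.sum_divisors_prime_pow hq]
    rw [Finset.sum_eq_single_of_mem 0 (Finset.mem_range.mpr (Nat.succ_pos β)) ?_]
    · simp
    · intro j _ hj0
      apply Finset.sum_eq_zero
      intro b _
      have h0 : legendreSym q ((q ^ j * b : ℕ) : ℤ) = 0 := by
        push_cast
        rw [legendreSym.mul, legendreSym_pow, hχq, zero_pow hj0, zero_mul]
      rw [h0, zero_mul]
  -- Term 2
  have hT2 : ∑ d ∈ N.divisors, legendreSym q (-((N / d : ℕ) : ℤ)) * (d : ℤ) ^ s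
      = legendreSym q (-(N₂ : ℤ)) * (q : ℤ) ^ (s * β)
        * ∑ b ∈ N₂.divisors, legendreSym q (b : ℤ) * (b : ℤ) ^ s := by
    have step1 : ∑ d ∈ N.divisors, legendreSym q (-((N / d : ℕ) : ℤ)) * (d : ℤ) ^ s
        = ∑ d ∈ N.divisors, legendreSym q (-(d : ℤ)) * ((N / d : ℕ) : ℤ) ^ s := by
      rw [← Nat.sum_div_divisors N (fun d => legendreSym q (-(d : ℤ)) * ((N / d : ℕ) : ℤ) ^ s)]
      refine Finset.sum_congr rfl fun d hd => ?_
      rw [Nat.mem_divisors] at hd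
      rw [Nat.div_div_self hd.1 hN.ne']
    rw [step1]
    conv_lhs => rw [← hNfac]
    rw [sum_divisors_coprime_mul hcop, Nat.sum_divisors_prime_pow hq]
    rw [Finset.sum_eq_single_of_mem 0 (Finset.mem_range.mpr (Nat.succ_pos β)) ?_]
    · have hneg2 : legendreSym q (-(N₂ : ℤ)) = legendreSym q (-1) * legendreSym q (N₂ : ℤ) := by
        rw [← legendreSym.mul]; ring_nf
      have hN₂sq : legendreSym q (N₂ : ℤ) ^ 2 = 1 := by
        apply legendreSym.sq_one
        rw [Int.cast_natCast, Ne, ZMod.natCast_eq_zero_iff]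
        exact hqN₂
      have e1 : ∑ b ∈ N₂.divisors,
          legendreSym q (-((q ^ 0 * b : ℕ) : ℤ)) * ((q ^ β * N₂ / (q ^ 0 * b) : ℕ) : ℤ) ^ s
          = ∑ b ∈ N₂.divisors,
              (legendreSym q (-1) * legendreSym q (N₂ : ℤ) * (q : ℤ) ^ (s * β))
              * (legendreSym q ((N₂ / b : ℕ) : ℤ) * ((N₂ / b : ℕ) : ℤ) ^ s) := by
        refine Finset.sum_congr rfl fun b hb => ?_
        rw [Nat.mem_divisors] at hb
        have hdiv : q ^ β * N₂ / (q ^ 0 * b) = q ^ β * (N₂ / b) := by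
          rw [pow_zero, one_mul, Nat.mul_div_assoc _ hb.1]
        rw [hdiv, pow_zero, one_mul]
        have hneg : legendreSym q (-(b : ℤ)) = legendreSym q (-1) * legendreSym q (b : ℤ) := by
          rw [← legendreSym.mul]; ring_nf
        have hcast : ((q ^ β * (N₂ / b) : ℕ) : ℤ) ^ s
            = (q : ℤ) ^ (s * β) * ((N₂ / b : ℕ) : ℤ) ^ s := by
          push_cast
          rw [mul_pow, ← pow_mul, mul_comm β s]
        have hχb : legendreSym q (b : ℤ)
            = legendreSym q (N₂ : ℤ) * legendreSym q ((N₂ / b : ℕ) : ℤ) := by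
          rw [hsq b hb.1, ← mul_assoc, ← sq, hN₂sq, one_mul]
        rw [hcast, hneg, hχb]
        ring
      rw [e1, ← Finset.mul_sum,
        Nat.sum_div_divisors N₂ (fun b => legendreSym q ((b : ℕ) : ℤ) * ((b : ℕ) : ℤ) ^ s),
        hneg2]
    · intro j _ hj0
      apply Finset.sum_eq_zero
      intro b _
      have h0 : legendreSym q (-((q ^ j * b : ℕ) : ℤ)) = 0 := by
        have : -((q ^ j * b : ℕ) : ℤ) = (-1) * (q : ℤ) ^ j * (b : ℤ) := by push_cast; ring
        rw [this, legendreSym.mul, legendreSym.mul, legendreSym_pow, hχq,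
          zero_pow hj0, mul_zero, zero_mul]
      rw [h0, zero_mul]
  -- factorization transfer
  have hfaceq : ∀ ℓ ∈ N₂.primeFactors, N.factorization ℓ = N₂.factorization ℓ := by
    intro ℓ hℓ
    have hℓq : ℓ ≠ q := fun h => hqN₂ (h ▸ Nat.dvd_of_mem_primeFactors hℓ)
    rw [hN₂def, hβ, Nat.factorization_ordCompl, Finsupp.erase_ne hℓq]
  have hP : (∏ ℓ ∈ N₂.primeFactors,
      ∑ t ∈ Finset.range (N.factorization ℓ + 1),
        (legendreSym q ℓ) ^ t * (ℓ : ℤ) ^ (s * t))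
      = ∑ b ∈ N₂.divisors, legendreSym q (b : ℤ) * (b : ℤ) ^ s := by
    rw [sum_legGeom q s hN₂0]
    exact Finset.prod_congr rfl fun ℓ hℓ => by rw [hfaceq ℓ hℓ]
  rw [hsplit, hT1, hT2, hP]
  ring
end

section
/- Let p be a prime with p ≥ 5. Then the Kummer congruence B_{p+1}/(p+1) ≡ 1/12 (mod p) holds: the rational number bernoulli(p+1)/(p+1) − 1/12 is either 0 or has p-adic valuation padicValRat p (bernoulli(p+1)/(p+1) − 1/12) ≥ 1. -/
set_option linter.unusedSectionVars false

open Finset Nat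

lemma bernoulli'_mul_factorial_int (n : ℕ) :
    bernoulli' n * (n + 1)! ∈ (Int.castRingHom ℚ).range := by
  induction n using Nat.strong_induction_on with
  | _ n ih =>
    rw [bernoulli'_def, sub_mul, one_mul, sum_mul]
    refine sub_mem ⟨((n+1)! : ℤ), by rw [eq_intCast]; push_cast; ring⟩ (sum_mem fun k hk => ?_)
    rw [mem_range] at hk
    have h1 : (k + 1)! ∣ n ! := factorial_dvd_factorial hk
    have h2 : ((n - k + 1 : ℕ) : ℚ) = (n : ℚ) - k + 1 := by
      push_cast [Nat.cast_sub hk.le]; ring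
    have h5 : ((n : ℚ) - k + 1) ≠ 0 := by
      rw [← h2]; positivity
    have h3q : (n.choose k : ℚ) * ((n:ℚ) + 1) = ((n+1).choose k : ℚ) * ((n : ℚ) - k + 1) := by
      rw [← h2]
      have h3 : n.choose k * (n + 1) = (n + 1).choose k * (n - k + 1) := by
        have := Nat.choose_mul_succ_eq n k
        have hnk : n + 1 - k = n - k + 1 := by omega
        rw [hnk] at this
        exact this
      exact_mod_cast congrArg (Nat.cast (R := ℚ)) h3
    have h7 : ((n ! / (k+1)! : ℕ) : ℚ) * ((k+1)! : ℚ) = (n ! : ℚ) :=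
      mod_cast congrArg (Nat.cast (R := ℚ)) (Nat.div_mul_cancel h1)
    have e1 : ((n+1)! : ℚ) = ((n:ℚ)+1) * n ! := by
      rw [factorial_succ]; push_cast; ring
    have key : (n.choose k : ℚ) / ((n : ℚ) - k + 1) * bernoulli' k * (n + 1)! =
        (((n+1).choose k : ℕ) : ℚ) * ((n ! / (k+1)! : ℕ) : ℚ) * (bernoulli' k * ((k+1)! : ℚ)) := by
      rw [div_mul_eq_mul_div, div_mul_eq_mul_div, div_eq_iff h5]
      linear_combination (bernoulli' k * (n ! : ℚ)) * h3q
        - ((((n+1).choose k : ℕ) : ℚ) * ((n:ℚ) - k + 1) * bernoulli' k) * h7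
        + ((n.choose k : ℚ) * bernoulli' k) * e1
    rw [key]
    obtain ⟨z, hz⟩ := ih k hk
    exact mul_mem (mul_mem ⟨((n+1).choose k : ℤ), by rw [eq_intCast]; push_cast; ring⟩
      ⟨((n ! / (k+1)! : ℕ) : ℤ), by rw [eq_intCast]; norm_cast⟩) ⟨z, hz⟩

lemma bernoulli_mul_factorial_int (n : ℕ) :
    bernoulli n * (n + 1)! ∈ (Int.castRingHom ℚ).range := by
  rw [bernoulli, mul_assoc]
  exact mul_mem ⟨(-1)^n, by rw [eq_intCast]; push_cast; ring⟩ (bernoulli'_mul_factorial_int n)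

lemma add_pow_of_sq_eq_zero' {R : Type*} [CommRing R] (x y : R) (hy : y * y = 0)
    (n : ℕ) : (x + y) ^ (n + 1) = x ^ (n + 1) + (n + 1) * x ^ n * y := by
  induction n with
  | zero => ring
  | succ m ihm =>
    rw [pow_succ, ihm]
    have h2 : y ^ 2 = 0 := by rw [sq]; exact hy
    push_cast
    ring_nf
    rw [h2]
    ring

section A
variable (p : ℕ) (hp : p.Prime) (hp5 : 5 ≤ p)
include hp hp5

/-- Fermat decomposition: `k^p = k + p*c`. -/
lemma pow_p_decomp (k : ℕ) : ∃ c : ℕ, k ^ p = k + p * c := by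
  haveI : Fact p.Prime := ⟨hp⟩
  have h1 : ((k ^ p : ℕ) : ZMod p) = ((k : ℕ) : ZMod p) := by
    push_cast
    exact ZMod.pow_card _
  have h2 : k ≤ k ^ p := Nat.le_self_pow hp.pos.ne' k
  have h3 : p ∣ k ^ p - k :=
    (Nat.modEq_iff_dvd' h2).mp ((ZMod.natCast_eq_natCast_iff _ _ _).mp h1).symm
  obtain ⟨c, hc⟩ := h3
  exact ⟨c, by omega⟩

/-- `p` divides `∑_{k<p} k^(p+1)`. -/
lemma p_dvd_S : p ∣ ∑ k ∈ range p, k ^ (p + 1) := by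
  haveI : Fact p.Prime := ⟨hp⟩
  rw [← ZMod.natCast_eq_zero_iff]
  push_cast
  have h1 : ∀ k ∈ range p, ((k : ZMod p)) ^ (p + 1) = (k : ZMod p) ^ 2 := by
    intro k _
    rw [pow_succ, ZMod.pow_card, sq]
  rw [Finset.sum_congr rfl h1]
  have h2 : ∑ k ∈ range p, ((k : ZMod p)) ^ 2 = ∑ x : ZMod p, x ^ 2 := by
    apply Finset.sum_nbij' (fun k => ((k : ℕ) : ZMod p)) (fun x => x.val)
    · intro a _; exact Finset.mem_univ _
    · intro x _; exact Finset.mem_range.mpr (ZMod.val_lt x)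
    · intro a ha; exact ZMod.val_cast_of_lt (Finset.mem_range.mp ha)
    · intro x _; exact ZMod.natCast_rightInverse x
    · intro a _; rfl
  rw [h2]
  have hcard : 2 < Fintype.card (ZMod p) - 1 := by
    rw [ZMod.card]; omega
  exact FiniteField.sum_pow_lt_card_sub_one (K := ZMod p) 2 hcard
end A

section B
variable (p : ℕ) (hp : p.Prime) (hp5 : 5 ≤ p)
include hp hp5

local notation "R" => ZMod (p ^ 2)

lemma twelve_mul_S :
    ((12 * ∑ k ∈ range p, k ^ (p + 1) : ℕ) : ZMod (p ^ 2)) = (p : ZMod (p ^ 2)) := by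
  haveI : Fact p.Prime := ⟨hp⟩
  obtain ⟨r, hr⟩ : ∃ r, p = 2 * r + 1 := by
    obtain ⟨r, hr⟩ := hp.odd_of_ne_two (by omega)
    exact ⟨r, hr⟩
  have hr2 : 2 ≤ r := by omega
  have hq2 : (p : R) * (p : R) = 0 := by
    rw [← Nat.cast_mul, ← pow_two, ZMod.natCast_self]
  -- inverse-mod facts
  have hmod1 : ∀ k < p, (r + 1) * (2 * k % p) % p = k := by
    intro k hk
    rw [Nat.mul_mod, Nat.mod_mod_of_dvd _ dvd_rfl, ← Nat.mul_mod]
    have h2 : (r + 1) * (2 * k) = k + p * k := by rw [hr]; ring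
    rw [h2, Nat.add_mul_mod_self_left, Nat.mod_eq_of_lt hk]
  have hmod2 : ∀ k < p, 2 * ((r + 1) * k % p) % p = k := by
    intro k hk
    rw [Nat.mul_mod, Nat.mod_mod_of_dvd _ dvd_rfl, ← Nat.mul_mod]
    have h2 : 2 * ((r + 1) * k) = k + p * k := by rw [hr]; ring
    rw [h2, Nat.add_mul_mod_self_left, Nat.mod_eq_of_lt hk]
  have hbij : ∀ F : ℕ → R, ∑ k ∈ range p, F (2 * k % p) = ∑ k ∈ range p, F k := by
    intro F
    apply Finset.sum_nbij' (fun k => 2 * k % p) (fun k => (r + 1) * k % p)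
    · intro a _; exact mem_range.mpr (Nat.mod_lt _ hp.pos)
    · intro a _; exact mem_range.mpr (Nat.mod_lt _ hp.pos)
    · intro a ha; exact hmod1 a (mem_range.mp ha)
    · intro a ha; exact hmod2 a (mem_range.mp ha)
    · intro a _; rfl
  set e : ℕ → ℕ := fun k => if p ≤ 2 * k then 1 else 0 with he
  have hdecomp : ∀ k < p,
      (((2 * k % p : ℕ)) : R) = ((2 * k : ℕ) : R) + -((p : R) * (e k : R)) := by
    intro k hk
    by_cases h : p ≤ 2 * k
    · have h1 : 2 * k % p = 2 * k - p := by
        rw [Nat.mod_eq_sub_mod h, Nat.mod_eq_of_lt (by omega)]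
      rw [h1, Nat.cast_sub h]
      simp only [he, if_pos h, Nat.cast_one, mul_one]
      ring
    · rw [Nat.mod_eq_of_lt (by omega)]
      simp only [he, if_neg h, Nat.cast_zero, mul_zero, neg_zero, add_zero]
  have hferm : ∀ k : ℕ, (p : R) * ((k : R)) ^ p = (p : R) * (k : R) := by
    intro k
    obtain ⟨c, hc⟩ := pow_p_decomp p hp hp5 k
    have h1 : ((k : R)) ^ p = ((k ^ p : ℕ) : R) := by push_cast; ring
    rw [h1, hc]
    push_cast
    linear_combination (c : R) * hq2
  obtain ⟨c2, hc2⟩ := pow_p_decomp p hp hp5 2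
  obtain ⟨s, hs⟩ := p_dvd_S p hp hp5
  set S : ℕ := ∑ k ∈ range p, k ^ (p + 1) with hS
  set U : ℕ := ∑ k ∈ range p, k * e k with hU
  -- expansion of each term
  have expand : ∀ k ∈ range p, (((2 * k % p : ℕ)) : R) ^ (p + 1) =
      (2 : R) ^ (p + 1) * (k : R) ^ (p + 1) -
        ((p : R) + 1) * (2 : R) ^ p * ((k : R) ^ p * (e k : R)) * (p : R) := by
    intro k hk
    rw [hdecomp k (mem_range.mp hk)]
    have hy : (-((p : R) * (e k : R))) * (-((p : R) * (e k : R))) = 0 := by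
      have : (-((p : R) * (e k : R))) * (-((p : R) * (e k : R))) =
          ((p : R) * (p : R)) * ((e k : R) * (e k : R)) := by ring
      rw [this, hq2, zero_mul]
    rw [add_pow_of_sq_eq_zero' _ _ hy p]
    push_cast
    ring
  have hcast : ((S : ℕ) : R) = ∑ k ∈ range p, ((k : R)) ^ (p + 1) := by
    rw [hS]; push_cast; rfl
  have main : ((S : ℕ) : R) = 2 ^ (p + 1) * ((S : ℕ) : R) -
      ((p : R) + 1) * 2 ^ p * ((p : R) * ((U : ℕ) : R)) := by
    have step1 : ((S : ℕ) : R) = ∑ k ∈ range p, (((2 * k % p : ℕ)) : R) ^ (p + 1) := by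
      rw [hcast]
      exact (hbij fun j => ((j : ℕ) : R) ^ (p + 1)).symm
    have h1 : ∑ k ∈ range p, (2 : R) ^ (p + 1) * (k : R) ^ (p + 1) =
        2 ^ (p + 1) * ((S : ℕ) : R) := by
      rw [hcast, Finset.mul_sum]
    have h2 : ∑ k ∈ range p,
        ((p : R) + 1) * (2 : R) ^ p * ((k : R) ^ p * (e k : R)) * (p : R) =
        ((p : R) + 1) * 2 ^ p * ((p : R) * ((U : ℕ) : R)) := by
      have hterm : ∀ k ∈ range p,
          ((p : R) + 1) * (2 : R) ^ p * ((k : R) ^ p * (e k : R)) * (p : R) =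
          ((p : R) + 1) * (2 : R) ^ p * (((p : R) * (k : R) ^ p) * (e k : R)) := by
        intro k _; ring
      rw [Finset.sum_congr rfl hterm]
      have hterm2 : ∀ k ∈ range p,
          ((p : R) + 1) * (2 : R) ^ p * (((p : R) * (k : R) ^ p) * (e k : R)) =
          ((p : R) + 1) * (2 : R) ^ p * (p : R) * ((k : R) * (e k : R)) := by
        intro k _; rw [hferm k]; ring
      rw [Finset.sum_congr rfl hterm2, ← Finset.mul_sum]
      have hUc : ((U : ℕ) : R) = ∑ k ∈ range p, (k : R) * (e k : R) := by
        rw [hU]; push_cast; rfl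
      rw [hUc]; ring
    calc ((S : ℕ) : R) = ∑ k ∈ range p, (((2 * k % p : ℕ)) : R) ^ (p + 1) := step1
      _ = ∑ k ∈ range p, ((2 : R) ^ (p + 1) * (k : R) ^ (p + 1) -
            ((p : R) + 1) * (2 : R) ^ p * ((k : R) ^ p * (e k : R)) * (p : R)) :=
          Finset.sum_congr rfl expand
      _ = 2 ^ (p + 1) * ((S : ℕ) : R) - ((p : R) + 1) * 2 ^ p * ((p : R) * ((U : ℕ) : R)) := by
          rw [Finset.sum_sub_distrib, h1, h2]
  -- auxiliary facts
  have h2p : (2 : R) ^ p = 2 + (p : R) * (c2 : R) := by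
    have := congrArg (Nat.cast : ℕ → R) hc2
    push_cast at this
    exact this
  have hsR : ((S : ℕ) : R) = (p : R) * (s : R) := by
    rw [hs]; push_cast; ring
  have h2p1 : (2 : R) ^ (p + 1) = 2 * (2 : R) ^ p := by rw [pow_succ]; ring
  rw [h2p1, h2p, hsR] at main
  have h3S : 3 * ((p : R) * (s : R)) = 2 * (p : R) * ((U : ℕ) : R) := by
    linear_combination (-1) * main + (2 * ((U : ℕ) : R) + (c2 : R) * ((U : ℕ) : R) +
      (p : R) * (c2 : R) * ((U : ℕ) : R) - 2 * (c2 : R) * (s : R)) * hq2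
  -- closed form for U
  have hUval : 2 * U + (r + 1) * r = (2 * r + 1) * (2 * r) := by
    have hsplit : ∑ k ∈ Finset.Ico 0 (r + 1), k * e k + ∑ k ∈ Finset.Ico (r + 1) p, k * e k
        = U := by
      rw [hU, Finset.range_eq_Ico]
      exact Finset.sum_Ico_consecutive _ (Nat.zero_le (r + 1)) (by omega)
    have hA : ∑ k ∈ Finset.Ico 0 (r + 1), k * e k = 0 := by
      apply Finset.sum_eq_zero
      intro k hk
      rw [Finset.mem_Ico] at hk
      simp only [he, if_neg (by omega : ¬ p ≤ 2 * k), mul_zero]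
    have hB : ∑ k ∈ Finset.Ico (r + 1) p, k * e k = ∑ k ∈ Finset.Ico (r + 1) p, k := by
      apply Finset.sum_congr rfl
      intro k hk
      rw [Finset.mem_Ico] at hk
      simp only [he, if_pos (by omega : p ≤ 2 * k), mul_one]
    have hsplit2 : ∑ k ∈ Finset.Ico 0 (r + 1), k + ∑ k ∈ Finset.Ico (r + 1) p, k
        = ∑ k ∈ Finset.range p, k := by
      rw [Finset.range_eq_Ico]
      exact Finset.sum_Ico_consecutive _ (Nat.zero_le (r + 1)) (by omega)
    have g1 : (∑ k ∈ Finset.range (r + 1), k) * 2 = (r + 1) * r := by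
      rw [Finset.sum_range_id_mul_two]; simp
    have g2 : (∑ k ∈ Finset.range p, k) * 2 = (2 * r + 1) * (2 * r) := by
      rw [Finset.sum_range_id_mul_two, hr]; simp
    rw [hA, hB, zero_add] at hsplit
    rw [← Finset.range_eq_Ico] at hsplit2
    linarith [hsplit, hsplit2, g1, g2]
  have hUcast : 2 * ((U : ℕ) : R) + ((r : R) + 1) * (r : R)
      = (2 * (r : R) + 1) * (2 * (r : R)) := by
    have := congrArg (Nat.cast : ℕ → R) hUval
    push_cast at this
    exact this
  have hpr : (p : R) = 2 * (r : R) + 1 := by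
    have h := congrArg (Nat.cast : ℕ → R) hr
    push_cast at h
    exact h
  rw [hpr] at h3S hq2 ⊢
  push_cast [hsR, hpr]
  linear_combination 4 * h3S + 4 * (2 * (r : R) + 1) * hUcast + (6 * (r : R) - 1) * hq2
end B

section C
variable {p : ℕ} [hp : Fact p.Prime]

lemma sum_val_ge {s : Finset ℕ} {f : ℕ → ℚ} {c : ℤ}
    (h : ∀ i ∈ s, f i = 0 ∨ c ≤ padicValRat p (f i)) :
    (∑ i ∈ s, f i) = 0 ∨ c ≤ padicValRat p (∑ i ∈ s, f i) := by
  classical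
  induction s using Finset.induction_on with
  | empty => left; simp
  | @insert a s' ha ih =>
    have ha' := h a (Finset.mem_insert_self a s')
    have hs' := ih fun i hi => h i (Finset.mem_insert_of_mem hi)
    rw [Finset.sum_insert ha]
    rcases ha' with h0 | hva
    · rw [h0, zero_add]; exact hs'
    rcases hs' with h0 | hvs
    · rw [h0, add_zero]; right; exact hva
    by_cases htot : f a + ∑ i ∈ s', f i = 0
    · left; exact htot
    · right
      exact le_trans (le_min hva hvs) (padicValRat.min_le_padicValRat_add htot)

lemma padicValNat_fac_le {n : ℕ} (hn : n + 1 < 2 * p) (hn2 : n + 1 < p ^ 2) :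
    (padicValNat p (n + 1)! : ℤ) ≤ 1 := by
  have hlog : Nat.log p (n + 1) < 2 :=
    Nat.log_lt_of_lt_pow (by omega) hn2
  rw [padicValNat_factorial hlog]
  have h1 : Finset.Ico 1 2 = {1} := rfl
  rw [h1, Finset.sum_singleton, pow_one]
  have : (n + 1) / p ≤ 1 :=
    Nat.lt_succ_iff.mp ((Nat.div_lt_iff_lt_mul hp.out.pos).mpr (by omega))
  exact_mod_cast this

lemma neg_one_le_val_bernoulli (hp5 : 5 ≤ p) {n : ℕ} (hn : n ≤ p)
    (hB : bernoulli n ≠ 0) : -1 ≤ padicValRat p (bernoulli n) := by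
  obtain ⟨z, hz⟩ := bernoulli_mul_factorial_int n
  rw [eq_intCast] at hz
  have hfac : ((n + 1)! : ℚ) ≠ 0 := by
    exact_mod_cast (n + 1).factorial_ne_zero
  have hBz : bernoulli n = (z : ℚ) / ((n + 1)! : ℚ) := by
    rw [eq_div_iff hfac, ← hz]
  have hzne : (z : ℚ) ≠ 0 := by
    rw [hz]; exact mul_ne_zero hB hfac
  rw [hBz, padicValRat.div hzne hfac]
  have h1 : 0 ≤ padicValRat p (z : ℚ) := by
    rw [padicValRat.of_int]
    exact_mod_cast Int.natCast_nonneg _ |>.trans_eq rfl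
  have h2 : padicValRat p (((n + 1)! : ℕ) : ℚ) ≤ 1 := by
    rw [padicValRat.of_nat]
    exact padicValNat_fac_le (by omega) (by nlinarith)
  omega
end C

lemma faulhaber_val (p : ℕ) (hp : p.Prime) (hp5 : 5 ≤ p) :
    ((∑ k ∈ range p, k ^ (p + 1) : ℕ) : ℚ) - p * bernoulli (p + 1) = 0 ∨
      2 ≤ padicValRat p (((∑ k ∈ range p, k ^ (p + 1) : ℕ) : ℚ) - p * bernoulli (p + 1)) := by
  haveI : Fact p.Prime := ⟨hp⟩
  have h := sum_range_pow p (p + 1)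
  rw [Finset.sum_range_succ] at h
  have hden : ((p + 1 : ℕ) : ℚ) + 1 ≠ 0 := by positivity
  have hlast : bernoulli (p + 1) * (((p + 1 + 1).choose (p + 1) : ℕ) : ℚ) *
      (p : ℚ) ^ (p + 1 + 1 - (p + 1)) / (((p + 1 : ℕ) : ℚ) + 1) = (p : ℚ) * bernoulli (p + 1) := by
    rw [Nat.choose_succ_self_right]
    have h1 : p + 1 + 1 - (p + 1) = 1 := by omega
    rw [h1, pow_one]
    push_cast
    field_simp
  have hcs : ((∑ k ∈ range p, k ^ (p + 1) : ℕ) : ℚ) = ∑ k ∈ range p, (k : ℚ) ^ (p + 1) := by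
    push_cast; rfl
  have hsplit : ((∑ k ∈ range p, k ^ (p + 1) : ℕ) : ℚ) - p * bernoulli (p + 1) =
      ∑ i ∈ range (p + 1),
        bernoulli i * (((p + 1 + 1).choose i : ℕ) : ℚ) * (p : ℚ) ^ (p + 1 + 1 - i) /
          (((p + 1 : ℕ) : ℚ) + 1) := by
    rw [hcs, h, hlast]; ring
  rw [hsplit]
  apply sum_val_ge
  intro i hi
  rw [Finset.mem_range] at hi
  by_cases hB : bernoulli i = 0
  · left; rw [hB]; ring
  right
  have hip : i < p := by
    rcases Nat.lt_succ_iff_lt_or_eq.mp hi with h' | rfl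
    · exact h'
    · exfalso
      apply hB
      rw [bernoulli_eq_bernoulli'_of_ne_one (by omega)]
      exact bernoulli'_eq_zero_of_odd (hp.odd_of_ne_two (by omega)) (by omega)
  have hpq : (p : ℚ) ≠ 0 := by positivity
  have hC : (((p + 1 + 1).choose i : ℕ) : ℚ) ≠ 0 := by
    exact_mod_cast (Nat.choose_pos (by omega)).ne'
  have hpow : (p : ℚ) ^ (p + 1 + 1 - i) ≠ 0 := pow_ne_zero _ hpq
  rw [padicValRat.div (mul_ne_zero (mul_ne_zero hB hC) hpow) hden,
    padicValRat.mul (mul_ne_zero hB hC) hpow, padicValRat.mul hB hC,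
    padicValRat.pow (p : ℚ)]
  have h1 : -1 ≤ padicValRat p (bernoulli i) :=
    neg_one_le_val_bernoulli hp5 (by omega) hB
  have h2 : 0 ≤ padicValRat p (((p + 1 + 1).choose i : ℕ) : ℚ) := by
    rw [padicValRat.of_nat]; positivity
  have h3 : padicValRat p (p : ℚ) = 1 := padicValRat.self hp.one_lt
  have h4 : padicValRat p (((p + 1 : ℕ) : ℚ) + 1) = 0 := by
    have hden2 : (((p + 1 : ℕ) : ℚ) + 1) = ((p + 2 : ℕ) : ℚ) := by push_cast; ring
    rw [hden2, padicValRat.of_nat]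
    norm_cast
    apply padicValNat.eq_zero_of_not_dvd
    intro hdvd
    have h5 := (Nat.dvd_add_right (dvd_refl p)).mp hdvd
    have := Nat.le_of_dvd (by norm_num) h5
    omega
  rw [h3, h4]
  have h5 : (3 : ℤ) ≤ (p + 1 + 1 - i : ℕ) := by
    have : 3 ≤ p + 1 + 1 - i := by omega
    exact_mod_cast this
  nlinarith [h1, h2, h5]


/-- **Kummer congruence `B_{p+1}/(p+1) ≡ 1/12 (mod p)`.**
For a prime `p ≥ 5`, the rational number `B_{p+1}/(p+1) − 1/12` is either `0`
or has `p`-adic valuation at least `1`. -/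
theorem kummer_congruence_bernoulli_succ
    (p : ℕ) (hp : p.Prime) (hp5 : 5 ≤ p) :
    bernoulli (p + 1) / ((p : ℚ) + 1) - 1 / 12 = 0 ∨
      1 ≤ padicValRat p (bernoulli (p + 1) / ((p : ℚ) + 1) - 1 / 12) := by
  haveI : Fact p.Prime := ⟨hp⟩
  set S : ℕ := ∑ k ∈ range p, k ^ (p + 1) with hS
  set B : ℚ := bernoulli (p + 1) with hBdef
  have hA := twelve_mul_S p hp hp5
  have hmod : 12 * S ≡ p [MOD p ^ 2] := (ZMod.natCast_eq_natCast_iff _ _ _).mp hA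
  have hdvd : ((p : ℤ) ^ 2) ∣ ((12 * S : ℤ) - p) := by
    have h := hmod.dvd
    have h2 := dvd_neg.mpr h
    push_cast at h2 ⊢
    convert h2 using 1
    · rfl
    · ring
  obtain ⟨t, ht⟩ := hdvd
  have ht0 : t ≠ 0 := by
    intro ht00
    rw [ht00, mul_zero] at ht
    have h3 : (3 : ℤ) ∣ (p : ℤ) := ⟨4 * S, by linarith⟩
    have h3' : 3 ∣ p := by exact_mod_cast h3
    have := Nat.Prime.eq_one_or_self_of_dvd hp 3 h3'
    omega
  have hpq : (p : ℚ) ≠ 0 := by positivity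
  have hv1 : 2 ≤ padicValRat p ((12 * S : ℚ) - p) := by
    have hq : ((12 * S : ℚ) - p) = ((p : ℚ) ^ 2) * (t : ℚ) := by
      exact_mod_cast congrArg (fun z : ℤ => (z : ℚ)) ht
    rw [hq, padicValRat.mul (pow_ne_zero _ hpq) (Int.cast_ne_zero.mpr ht0),
      padicValRat.pow (p : ℚ), padicValRat.self hp.one_lt]
    have h0 : 0 ≤ padicValRat p ((t : ℤ) : ℚ) := by
      rw [padicValRat.of_int]
      exact_mod_cast Nat.zero_le _
    push_cast
    linarith
  have hv1ne : ((12 * S : ℚ) - p) ≠ 0 := by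
    have hq : ((12 * S : ℚ) - p) = ((p : ℚ) ^ 2) * (t : ℚ) := by
      exact_mod_cast congrArg (fun z : ℤ => (z : ℚ)) ht
    rw [hq]
    exact mul_ne_zero (pow_ne_zero _ hpq) (Int.cast_ne_zero.mpr ht0)
  have hv2 := faulhaber_val p hp hp5
  have hval12 : padicValRat p (12 : ℚ) = 0 := by
    rw [show ((12 : ℚ)) = ((12 : ℕ) : ℚ) by norm_num, padicValRat.of_nat]
    norm_cast
    apply padicValNat.eq_zero_of_not_dvd
    intro h
    rw [show (12 : ℕ) = 4 * 3 by norm_num] at h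
    rcases (Nat.Prime.dvd_mul hp).mp h with h' | h' <;>
      · have := Nat.le_of_dvd (by norm_num) h'
        omega
  have hy : (12 : ℚ) * (p : ℚ) * (B - 1 / 12) =
      12 * ((p : ℚ) * B - (S : ℚ)) + ((12 * S : ℚ) - p) := by push_cast; ring
  have hv112 : padicValRat p ((1 : ℚ) / 12) = 0 := by
    rw [padicValRat.div one_ne_zero (by norm_num), hval12, padicValRat.one]
    norm_num
  have hvy : B - 1 / 12 = 0 ∨ 1 ≤ padicValRat p (B - 1 / 12) := by
    by_cases hB12 : B - 1 / 12 = 0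
    · left; exact hB12
    right
    have hyne : (12 : ℚ) * (p : ℚ) * (B - 1 / 12) ≠ 0 :=
      mul_ne_zero (mul_ne_zero (by norm_num) hpq) hB12
    have hvy2 : 2 ≤ padicValRat p ((12 : ℚ) * (p : ℚ) * (B - 1 / 12)) := by
      rw [hy]
      by_cases hSB : ((S : ℚ)) - (p : ℚ) * B = 0
      · have h0 : (p : ℚ) * B - (S : ℚ) = 0 := by linarith
        rw [h0, mul_zero, zero_add]
        exact hv1
      · have hv2' : 2 ≤ padicValRat p ((S : ℚ) - (p : ℚ) * B) := hv2.resolve_left hSB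
        have hne1 : (12 : ℚ) * ((p : ℚ) * B - (S : ℚ)) ≠ 0 := by
          intro h0
          apply hSB
          rcases mul_eq_zero.mp h0 with h' | h'
          · norm_num at h'
          · linarith
        have hval1 : 2 ≤ padicValRat p ((12 : ℚ) * ((p : ℚ) * B - (S : ℚ))) := by
          rw [padicValRat.mul (by norm_num) (fun h => hne1 (by rw [h, mul_zero])), hval12]
          have hneg : (p : ℚ) * B - (S : ℚ) = -(((S : ℚ)) - (p : ℚ) * B) := by ring
          rw [hneg, padicValRat.neg]
          linarith
        have hsumne : (12 : ℚ) * ((p : ℚ) * B - (S : ℚ)) + ((12 * S : ℚ) - p) ≠ 0 := by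
          rw [← hy]; exact hyne
        calc (2 : ℤ) ≤ min (padicValRat p ((12 : ℚ) * ((p : ℚ) * B - (S : ℚ))))
              (padicValRat p ((12 * S : ℚ) - p)) := le_min hval1 hv1
          _ ≤ _ := padicValRat.min_le_padicValRat_add hsumne
    have hmul : padicValRat p ((12 : ℚ) * (p : ℚ) * (B - 1 / 12)) =
        padicValRat p ((12 : ℚ) * (p : ℚ)) + padicValRat p (B - 1 / 12) :=
      padicValRat.mul (mul_ne_zero (by norm_num) hpq) hB12
    have h12p : padicValRat p ((12 : ℚ) * (p : ℚ)) = 1 := by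
      rw [padicValRat.mul (by norm_num) hpq, hval12, padicValRat.self hp.one_lt]
      norm_num
    rw [hmul, h12p] at hvy2
    linarith
  -- final step
  have hp1q : ((p : ℚ) + 1) ≠ 0 := by positivity
  have hvp1 : padicValRat p ((p : ℚ) + 1) = 0 := by
    rw [show ((p : ℚ) + 1) = ((p + 1 : ℕ) : ℚ) by push_cast; ring, padicValRat.of_nat]
    norm_cast
    apply padicValNat.eq_zero_of_not_dvd
    intro hdvd2
    have h5 := (Nat.dvd_add_right (dvd_refl p)).mp hdvd2
    have := Nat.le_of_dvd (by norm_num) h5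
    omega
  by_cases hT : B / ((p : ℚ) + 1) - 1 / 12 = 0
  · left; exact hT
  right
  have hBne : B ≠ 0 := by
    intro h0
    rcases hvy with h | h
    · rw [h0] at h; norm_num at h
    · rw [h0, zero_sub, padicValRat.neg, hv112] at h
      omega
  have hvB : 0 ≤ padicValRat p B := by
    by_cases hB12 : B - 1 / 12 = 0
    · have : B = 1 / 12 := by linarith
      rw [this, hv112]
    · have h1 : 1 ≤ padicValRat p (B - 1 / 12) := hvy.resolve_left hB12
      have hBsum : (B - 1 / 12) + 1 / 12 = B := by ring
      have hmin := padicValRat.min_le_padicValRat_add (p := p)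
        (q := B - 1 / 12) (r := 1 / 12) (by rw [hBsum]; exact hBne)
      rw [hBsum, hv112] at hmin
      have := min_le_of_right_le (b := padicValRat p (B - 1/12)) (le_refl (0:ℤ))
      omega
  have hfrac_ne : (p : ℚ) / ((p : ℚ) + 1) * B ≠ 0 :=
    mul_ne_zero (div_ne_zero hpq hp1q) hBne
  have hvfrac : 1 ≤ padicValRat p ((p : ℚ) / ((p : ℚ) + 1) * B) := by
    rw [padicValRat.mul (div_ne_zero hpq hp1q) hBne,
      padicValRat.div hpq hp1q, padicValRat.self hp.one_lt, hvp1]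
    linarith
  have hdecT : B / ((p : ℚ) + 1) - 1 / 12 =
      (B - 1 / 12) + (-((p : ℚ) / ((p : ℚ) + 1) * B)) := by
    field_simp
    ring
  rcases hvy with h | h
  · rw [hdecT, h, zero_add, padicValRat.neg]
    exact hvfrac
  · by_cases hB12 : B - 1 / 12 = 0
    · rw [hdecT, hB12, zero_add, padicValRat.neg]
      exact hvfrac
    · have hsumne : (B - 1 / 12) + (-((p : ℚ) / ((p : ℚ) + 1) * B)) ≠ 0 := by
        rw [← hdecT]; exact hT
      have hmin := padicValRat.min_le_padicValRat_add (p := p) hsumne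
      rw [padicValRat.neg] at hmin
      rw [hdecT]
      calc (1 : ℤ) ≤ min (padicValRat p (B - 1 / 12))
            (padicValRat p ((p : ℚ) / ((p : ℚ) + 1) * B)) := le_min h hvfrac
        _ ≤ _ := by
            have := padicValRat.min_le_padicValRat_add (p := p) hsumne
            rwa [padicValRat.neg] at this
end

section
/- Let q be a prime with q ≡ 3 (mod 4) and χ(a) = legendreSym q a, and let p be a prime with p > 3 and p ≠ q. Define the generalized Bernoulli numbers B_{p,χ} := q^{p−1} · Σ_{a=1}^{q−1} χ(a) · B_p(a/q) and B_{1,χ} := Σ_{a=1}^{q−1} χ(a) · (a/q − 1/2), where B_n(x) is the n-th Bernoulli polynomial. Then B_{p,χ}/p ≡ (1 − χ(p)) · B_{1,χ} (mod p): the rational number B_{p,χ}/p − (1 − χ(p))·B_{1,χ} is either 0 or has p-adic valuation ≥ 1. -/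
open Finset

namespace KummerAux
set_option linter.unusedSectionVars false
set_option maxHeartbeats 1000000


/-- `eps p k = p^{-k}` as a rational. -/
def eps (p k : ℕ) : ℚ := ((p : ℚ) ^ k)⁻¹

variable {p : ℕ} [hp : Fact p.Prime]

lemma p_pos : (0:ℚ) < (p:ℚ) := by
  exact_mod_cast hp.out.pos

lemma eps_pos (k : ℕ) : 0 < eps p k := by
  have h := p_pos (p := p)
  unfold eps; positivity

lemma eps_nonneg (k : ℕ) : 0 ≤ eps p k := (eps_pos k).le

lemma eps_zero : eps p 0 = 1 := by simp [eps]

lemma eps_mul (a b : ℕ) : eps p (a + b) = eps p a * eps p b := by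
  simp [eps, pow_add, mul_comm]

lemma eps_antitone {a b : ℕ} (h : a ≤ b) : eps p b ≤ eps p a := by
  have hp1 : (1:ℚ) ≤ (p:ℚ) := by exact_mod_cast hp.out.one_le
  unfold eps
  apply inv_anti₀
  · positivity
  · exact pow_le_pow_right₀ hp1 h

lemma norm_le_eps_of_le {x : ℚ} {a b : ℕ} (hx : padicNorm p x ≤ eps p b) (hab : a ≤ b) :
    padicNorm p x ≤ eps p a := hx.trans (eps_antitone hab)

lemma norm_int (z : ℤ) : padicNorm p (z : ℚ) ≤ eps p 0 := by
  rw [eps_zero]; exact padicNorm.of_int z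

lemma norm_nat (n : ℕ) : padicNorm p (n : ℚ) ≤ eps p 0 := by
  rw [eps_zero]; exact padicNorm.of_nat n

lemma norm_mul_le {x y : ℚ} {a b : ℕ} (hx : padicNorm p x ≤ eps p a)
    (hy : padicNorm p y ≤ eps p b) : padicNorm p (x * y) ≤ eps p (a + b) := by
  rw [padicNorm.mul, eps_mul]
  exact mul_le_mul hx hy (padicNorm.nonneg y) (eps_nonneg a)

lemma norm_add_le {x y : ℚ} {a : ℕ} (hx : padicNorm p x ≤ eps p a)
    (hy : padicNorm p y ≤ eps p a) : padicNorm p (x + y) ≤ eps p a :=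
  (padicNorm.nonarchimedean).trans (max_le hx hy)

lemma norm_sub_le {x y : ℚ} {a : ℕ} (hx : padicNorm p x ≤ eps p a)
    (hy : padicNorm p y ≤ eps p a) : padicNorm p (x - y) ≤ eps p a := by
  rw [sub_eq_add_neg]
  exact norm_add_le hx (by rwa [padicNorm.neg])

lemma norm_sum_le {α : Type*} {s : Finset α} {F : α → ℚ} {a : ℕ}
    (h : ∀ i ∈ s, padicNorm p (F i) ≤ eps p a) :
    padicNorm p (∑ i ∈ s, F i) ≤ eps p a :=
  padicNorm.sum_le' h (eps_nonneg a)

lemma norm_p_pow (k : ℕ) : padicNorm p ((p:ℚ) ^ k) ≤ eps p k := by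
  rw [show ((p:ℚ) ^ k) = ((p ^ k : ℕ) : ℚ) by push_cast; ring]
  have : ((p:ℕ)^k : ℤ) ∣ (p ^ k : ℕ) := by norm_cast
  have h := (padicNorm.dvd_iff_norm_le (p := p) (n := k) (z := ((p^k : ℕ) : ℤ))).mp (by exact_mod_cast this)
  rw [eps]
  calc padicNorm p (((p^k : ℕ) : ℤ) : ℚ) ≤ (p:ℚ) ^ (-(k:ℤ)) := by exact_mod_cast h
    _ = ((p:ℚ) ^ k)⁻¹ := by rw [zpow_neg, zpow_natCast]
  
lemma norm_int_dvd {z : ℤ} {k : ℕ} (h : ((p:ℤ))^k ∣ z) : padicNorm p (z : ℚ) ≤ eps p k := by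
  have h' := (padicNorm.dvd_iff_norm_le (p := p) (n := k) (z := z)).mp (by exact_mod_cast h)
  rw [eps]
  calc padicNorm p (z : ℚ) ≤ (p:ℚ) ^ (-(k:ℤ)) := h'
    _ = ((p:ℚ) ^ k)⁻¹ := by rw [zpow_neg, zpow_natCast]

lemma norm_nat_not_dvd {m : ℕ} (h : ¬ p ∣ m) : padicNorm p (m : ℚ) = 1 :=
  (padicNorm.nat_eq_one_iff m).mpr h

lemma norm_inv_nat {m : ℕ} (h : ¬ p ∣ m) : padicNorm p ((m : ℚ)⁻¹) ≤ eps p 0 := by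
  have hm : (m:ℚ) ≠ 0 := by
    intro h0
    exact h (by simpa using (Nat.cast_eq_zero.mp h0) ▸ dvd_zero p)
  have hmul : padicNorm p ((m:ℚ)⁻¹ * (m:ℚ)) = padicNorm p ((m:ℚ)⁻¹) * padicNorm p (m:ℚ) :=
    padicNorm.mul _ _
  rw [inv_mul_cancel₀ hm] at hmul
  have h1 : padicNorm p ((1:ℚ)) = 1 := padicNorm.one
  rw [eps_zero]
  have := norm_nat_not_dvd (p := p) h
  nlinarith [padicNorm.nonneg (p := p) ((m:ℚ)⁻¹)]

lemma norm_div_nat {x : ℚ} {a : ℕ} {m : ℕ} (hx : padicNorm p x ≤ eps p a) (h : ¬ p ∣ m) :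
    padicNorm p (x / m) ≤ eps p a := by
  rw [div_eq_mul_inv]
  simpa using norm_mul_le hx (norm_inv_nat h)

/-- transfer a sum over `range n` to a sum over `ZMod n`. -/
lemma sum_range_zmod {n : ℕ} [NeZero n] {M : Type*} [AddCommMonoid M] (f : ZMod n → M) :
    ∑ a ∈ Finset.range n, f (a : ZMod n) = ∑ x : ZMod n, f x := by
  refine Finset.sum_nbij' (fun a => (a : ZMod n)) (fun x => x.val) ?_ ?_ ?_ ?_ ?_
  · intro a _; exact Finset.mem_univ _
  · intro x _; exact Finset.mem_range.mpr (ZMod.val_lt x)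
  · intro a ha; exact ZMod.val_cast_of_lt (Finset.mem_range.mp ha)
  · intro x _; exact ZMod.natCast_rightInverse x
  · intro a _; rfl



lemma pow_sum_dvd {k : ℕ} (hk : k < p - 1) : p ∣ ∑ m ∈ range p, m ^ k := by
  have : ((∑ m ∈ range p, m ^ k : ℕ) : ZMod p) = 0 := by
    push_cast
    rw [sum_range_zmod (n := p) (f := fun x : ZMod p => x ^ k)]
    have hcard : Fintype.card (ZMod p) = p := ZMod.card p
    have := FiniteField.sum_pow_lt_card_sub_one (K := ZMod p) k (by rwa [hcard])
    exact this
  exact (ZMod.natCast_eq_zero_iff _ _).mp this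

lemma norm_M_le {k : ℕ} (hk : k < p - 1) :
    padicNorm p (∑ m ∈ range p, (m:ℚ) ^ k) ≤ eps p 1 := by
  have : (∑ m ∈ range p, (m:ℚ) ^ k) = ((∑ m ∈ range p, m ^ k : ℕ) : ℚ) := by push_cast; ring
  rw [this]
  have hd : ((p:ℤ))^1 ∣ ((∑ m ∈ range p, m ^ k : ℕ) : ℤ) := by
    rw [pow_one]
    exact_mod_cast Int.natCast_dvd_natCast.mpr (pow_sum_dvd hk)
  exact_mod_cast norm_int_dvd hd

lemma not_dvd_small {m : ℕ} (h0 : 0 < m) (h : m < p) : ¬ p ∣ m :=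
  Nat.not_dvd_of_pos_of_lt h0 h
lemma bernoulli_norm_le : ∀ k, k < p - 1 → padicNorm p (_root_.bernoulli k) ≤ eps p 0 := by
  intro k
  induction k using Nat.strong_induction_on with
  | _ k IH =>
    intro hk
    rcases Nat.eq_zero_or_pos k with rfl | hk0
    · rw [bernoulli_zero, eps_zero, padicNorm.one]
    have hF := sum_range_pow p k
    rw [Finset.sum_range_succ] at hF
    have hkp : k + 1 < p := by omega
    have hknd : ¬ p ∣ (k+1) := not_dvd_small (by omega) hkp
    have hk1 : ((k:ℚ) + 1) ≠ 0 := by positivity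
    have hlast : _root_.bernoulli k * ((k+1).choose k : ℚ) * (p:ℚ)^(k+1-k) / ((k:ℚ)+1)
        = (p:ℚ) * _root_.bernoulli k := by
      rw [Nat.choose_succ_self_right]
      rw [Nat.add_sub_cancel_left]  -- k+1-k = 1 ?
      push_cast
      field_simp
    rw [hlast] at hF
    -- p * B_k = M - rest
    have heq : (p:ℚ) * _root_.bernoulli k
        = (∑ m ∈ range p, (m:ℚ) ^ k)
          - ∑ i ∈ range k, _root_.bernoulli i * ((k+1).choose i : ℚ) * (p:ℚ)^(k+1-i) / ((k:ℚ)+1) := by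
      rw [hF]; ring
    have hrest : padicNorm p (∑ i ∈ range k,
        _root_.bernoulli i * ((k+1).choose i : ℚ) * (p:ℚ)^(k+1-i) / ((k:ℚ)+1)) ≤ eps p 1 := by
      apply norm_sum_le
      intro i hi
      have hi' := Finset.mem_range.mp hi
      have h1 : padicNorm p (_root_.bernoulli i * ((k+1).choose i : ℚ) * (p:ℚ)^(k+1-i))
          ≤ eps p (k+1-i) := by
        have := norm_mul_le (norm_mul_le (IH i hi' (by omega)) (norm_nat ((k+1).choose i)))
          (norm_p_pow (k+1-i))
        simpa using this
      have h2 := norm_le_eps_of_le h1 (by omega : 1 ≤ k+1-i)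
      have : ((k:ℚ)+1) = ((k+1 : ℕ) : ℚ) := by push_cast; ring
      rw [this]
      exact norm_div_nat h2 hknd
    have hM := norm_M_le hk
    have hfin : padicNorm p ((p:ℚ) * _root_.bernoulli k) ≤ eps p 1 := by
      rw [heq]; exact norm_sub_le hM hrest
    -- divide by p
    rw [padicNorm.mul] at hfin
    have hnp : padicNorm p (p:ℚ) = ((p:ℚ))⁻¹ := padicNorm.padicNorm_p hp.out.one_lt
    rw [hnp] at hfin
    have hppos : (0:ℚ) < (p:ℚ) := by exact_mod_cast hp.out.pos
    rw [eps_zero]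
    have : eps p 1 = ((p:ℚ))⁻¹ * 1 := by simp [eps]
    rw [this] at hfin
    exact le_of_mul_le_mul_left hfin (by positivity)

lemma norm_nat_dvd {m k : ℕ} (h : p^k ∣ m) : padicNorm p (m : ℚ) ≤ eps p k := by
  have : ((p:ℤ))^k ∣ (m : ℤ) := by exact_mod_cast Int.natCast_dvd_natCast.mpr h
  exact_mod_cast norm_int_dvd this

lemma norm_choose_p {j : ℕ} (hj0 : j ≠ 0) (hjp : j < p) :
    padicNorm p ((p.choose j : ℕ) : ℚ) ≤ eps p 1 := by
  apply norm_nat_dvd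
  rw [pow_one]
  exact Nat.Prime.dvd_choose_self hp.out hj0 hjp

lemma sigma_norm (hp3 : 3 < p) {i : ℕ} (h1 : 1 ≤ i) (h2 : i ≤ p - 1) :
    padicNorm p ((∑ m ∈ range p, (m:ℚ)^i) - (p:ℚ) * _root_.bernoulli i) ≤ eps p 2 := by
  have hF := sum_range_pow p i
  rw [Finset.sum_range_succ] at hF
  have hlast : _root_.bernoulli i * ((i+1).choose i : ℚ) * (p:ℚ)^(i+1-i) / ((i:ℚ)+1)
      = (p:ℚ) * _root_.bernoulli i := by
    rw [Nat.choose_succ_self_right, Nat.add_sub_cancel_left]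
    push_cast
    have : ((i:ℚ)+1) ≠ 0 := by positivity
    field_simp
  rw [hlast] at hF
  have heq : (∑ m ∈ range p, (m:ℚ) ^ i) - (p:ℚ) * _root_.bernoulli i
      = ∑ j ∈ range i, _root_.bernoulli j * ((i+1).choose j : ℚ) * (p:ℚ)^(i+1-j) / ((i:ℚ)+1) := by
    rw [hF]; ring
  rw [heq]
  apply norm_sum_le
  intro j hj
  have hj' := Finset.mem_range.mp hj
  have hBj : padicNorm p (_root_.bernoulli j) ≤ eps p 0 :=
    bernoulli_norm_le j (by omega)
  by_cases hcase : i + 1 < p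
  · -- denominator prime to p
    have h1' : padicNorm p (_root_.bernoulli j * ((i+1).choose j : ℚ) * (p:ℚ)^(i+1-j))
        ≤ eps p (i+1-j) := by
      have := norm_mul_le (norm_mul_le hBj (norm_nat ((i+1).choose j))) (norm_p_pow (i+1-j))
      simpa using this
    have h2' := norm_le_eps_of_le h1' (by omega : 2 ≤ i+1-j)
    have hc : ((i:ℚ)+1) = ((i+1 : ℕ) : ℚ) := by push_cast; ring
    rw [hc]
    exact norm_div_nat h2' (not_dvd_small (by omega) hcase)
  · -- i = p - 1, denominator is p
    have hip : i = p - 1 := by omega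
    have hiq : ((i:ℚ)+1) = (p:ℚ) := by
      rw [hip]; push_cast [Nat.cast_sub (by omega : 1 ≤ p)]; ring
    have hterm : _root_.bernoulli j * ((i+1).choose j : ℚ) * (p:ℚ)^(i+1-j) / ((i:ℚ)+1)
        = _root_.bernoulli j * ((i+1).choose j : ℚ) * (p:ℚ)^(i-j) := by
      rw [hiq]
      have hrw : (p:ℚ)^(i+1-j) = (p:ℚ)^(i-j) * (p:ℚ) := by
        rw [← pow_succ]
        congr 1
        omega
      rw [hrw]
      have hpne : (p:ℚ) ≠ 0 := by
        have : (0:ℚ) < (p:ℚ) := by exact_mod_cast hp.out.pos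
        linarith
      field_simp
    rw [hterm]
    have hchoose : i + 1 = p := by omega
    rcases Nat.eq_zero_or_pos j with rfl | hj0
    · -- j = 0 : term = p^i, i = p-1 ≥ 2
      have : padicNorm p (_root_.bernoulli 0 * (((i+1).choose 0 : ℕ) : ℚ) * (p:ℚ)^(i-0))
          ≤ eps p (i-0) := by
        have := norm_mul_le (norm_mul_le (bernoulli_norm_le 0 (show (0:ℕ) < p - 1 by omega)) (norm_nat ((i+1).choose 0)))
          (norm_p_pow (i-0))
        simpa using this
      exact norm_le_eps_of_le this (by omega)
    · have hcn : padicNorm p (((i+1).choose j : ℕ) : ℚ) ≤ eps p 1 := by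
        rw [hchoose]
        exact norm_choose_p (by omega) (by omega)
      have := norm_mul_le (norm_mul_le hBj hcn) (norm_p_pow (i-j))
      refine norm_le_eps_of_le (by simpa using this) (by omega)

end KummerAux
namespace KummerAux
lemma sum_range_mul {M : Type*} [AddCommMonoid M] (f : ℕ → M) (m n : ℕ) :
    ∑ a ∈ range (m*n), f a = ∑ i ∈ range m, ∑ j ∈ range n, f (n*i + j) := by
  induction m with
  | zero => simp
  | succ m ih =>
    rw [Nat.succ_mul, Finset.sum_range_add, ih, Finset.sum_range_succ]
    congr 1
    apply Finset.sum_congr rfl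
    intro j _
    rw [Nat.mul_comm n m]

section Chi
variable (q : ℕ) [hq : Fact q.Prime]

/-- the quadratic character on `ZMod q`, valued in `ℚ`. -/
def chi' (x : ZMod q) : ℚ := ((quadraticChar (ZMod q) x : ℤ) : ℚ)

lemma chi_eq (a : ℕ) : ((legendreSym q (a:ℤ) : ℤ) : ℚ) = chi' q ((a : ZMod q)) := by
  unfold chi' legendreSym
  norm_num

lemma chi'_sum_zero (hq2 : q ≠ 2) : ∑ x : ZMod q, chi' q x = 0 := by
  unfold chi'
  have h : (ringChar (ZMod q)) ≠ 2 := by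
    rw [ZMod.ringChar_zmod_n]; exact hq2
  have := quadraticChar_sum_zero (F := ZMod q) h
  exact_mod_cast congrArg (fun z : ℤ => (z : ℚ)) this

lemma chi_shift_sum (hq2 : q ≠ 2) {c : ZMod q} (hc : c ≠ 0) (d : ZMod q) :
    ∑ x : ZMod q, chi' q (c * x + d) = 0 := by
  have he := Equiv.sum_comp ((Equiv.mulLeft₀ c hc).trans (Equiv.addRight d)) (chi' q)
  have hx : ∀ x, ((Equiv.mulLeft₀ c hc).trans (Equiv.addRight d)) x = c * x + d := fun x => rfl
  simp only [hx] at he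
  rw [he, chi'_sum_zero q hq2]

end Chi

end KummerAux
namespace KummerAux
set_option linter.unusedSectionVars false
section Main
variable (q : ℕ) [hq : Fact q.Prime] (p : ℕ) [hp : Fact p.Prime]

/-- `S q n = ∑_{b<q} χ(b) b^n`. -/
def S (n : ℕ) : ℚ := ∑ b ∈ range q, chi' q (b : ZMod q) * (b:ℚ)^n

/-- `U q p n = ∑_{a<pq} χ(a) a^n`. -/
def U (n : ℕ) : ℚ := ∑ a ∈ range (p*q), chi' q (a : ZMod q) * (a:ℚ)^n

lemma chi'_zero : chi' q 0 = 0 := by unfold chi'; simp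

lemma chi'_mul (x y : ZMod q) : chi' q (x*y) = chi' q x * chi' q y := by
  unfold chi'
  rw [map_mul]
  push_cast
  ring

lemma norm_chi' (x : ZMod q) : padicNorm p (chi' q x) ≤ eps p 0 := norm_int _

lemma norm_S (n : ℕ) : padicNorm p (S q n) ≤ eps p 0 := by
  apply norm_sum_le
  intro b _
  have h2 : padicNorm p ((b:ℚ)^n) ≤ eps p 0 := by
    rw [show ((b:ℚ))^n = ((b^n : ℕ) : ℚ) by push_cast; ring]
    exact norm_nat _
  have := norm_mul_le (p := p) (norm_chi' q p (b : ZMod q)) h2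
  simpa using this

lemma Schi0 (hq2 : q ≠ 2) : ∑ b ∈ range q, chi' q (b : ZMod q) = 0 := by
  haveI : NeZero q := ⟨hq.out.ne_zero⟩
  rw [sum_range_zmod (f := chi' q)]
  exact chi'_sum_zero q hq2

lemma chi_shift_sum_nat (hq2 : q ≠ 2) (hqp : ¬ q ∣ p) (j : ℕ) :
    ∑ i ∈ range q, chi' q ((p*i+j : ℕ) : ZMod q) = 0 := by
  haveI : NeZero q := ⟨hq.out.ne_zero⟩
  have hc : ((p:ℕ) : ZMod q) ≠ 0 := by
    rw [Ne, ZMod.natCast_eq_zero_iff]; exact hqp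
  have hcast : ∀ i : ℕ, ((p*i+j : ℕ) : ZMod q) = (p : ZMod q) * ((i:ℕ) : ZMod q) + ((j:ℕ) : ZMod q) := by
    intro i; push_cast; ring
  simp only [hcast]
  rw [sum_range_zmod (f := fun x : ZMod q => chi' q ((p:ZMod q) * x + ((j:ℕ):ZMod q)))]
  exact chi_shift_sum q hq2 hc _

lemma F1 (hq2 : q ≠ 2) : U q p 1 = p * S q 1 := by
  unfold U
  rw [sum_range_mul (fun a => chi' q (a : ZMod q) * (a:ℚ)^1) p q]
  have hinner : ∀ i, ∑ j ∈ range q, chi' q ((q*i+j : ℕ) : ZMod q) * ((q*i+j : ℕ):ℚ)^1 = S q 1 := by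
    intro i
    have h1 : ∀ j : ℕ, ((q*i+j : ℕ) : ZMod q) = ((j:ℕ) : ZMod q) := by
      intro j; push_cast; simp [ZMod.natCast_self]
    have h2 : ∀ j : ℕ, (((q*i+j : ℕ)):ℚ)^1 = (q:ℚ)*i + j := by intro j; push_cast; ring
    calc ∑ j ∈ range q, chi' q ((q*i+j : ℕ) : ZMod q) * ((q*i+j : ℕ):ℚ)^1
        = ∑ j ∈ range q, ((q:ℚ)*i * chi' q ((j:ℕ) : ZMod q) + chi' q ((j:ℕ):ZMod q) * (j:ℚ)^1) := by
          apply Finset.sum_congr rfl; intro j _; rw [h1 j, h2 j]; ring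
      _ = (q:ℚ)*i * (∑ j ∈ range q, chi' q ((j:ℕ) : ZMod q)) + S q 1 := by
          rw [Finset.sum_add_distrib, Finset.mul_sum]; rfl
      _ = S q 1 := by rw [Schi0 q hq2]; ring
  rw [Finset.sum_congr rfl (fun i _ => hinner i), Finset.sum_const, Finset.card_range]
  simp [nsmul_eq_mul]

lemma S_zero (hq2 : q ≠ 2) : S q 0 = 0 := by
  unfold S
  simp only [pow_zero, mul_one]
  exact Schi0 q hq2

lemma bern_eval (n : ℕ) (x : ℚ) : (Polynomial.bernoulli n).eval x
    = ∑ i ∈ range (n+1), _root_.bernoulli i * (n.choose i : ℚ) * x^(n-i) := by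
  unfold Polynomial.bernoulli
  rw [Polynomial.eval_finset_sum]
  apply Finset.sum_congr rfl
  intro i _
  rw [Polynomial.eval_monomial]

lemma U_p_expand : U q p p
    = ∑ k ∈ range (p+1), (p.choose k : ℚ) * (q:ℚ)^k * (∑ i ∈ range p, (i:ℚ)^k) * S q (p-k) := by
  unfold U
  rw [sum_range_mul (fun a => chi' q (a : ZMod q) * (a:ℚ)^p) p q]
  have key : ∀ i ∈ range p, ∑ j ∈ range q, chi' q ((q*i+j : ℕ) : ZMod q) * ((q*i+j:ℕ):ℚ)^p
      = ∑ k ∈ range (p+1), ((p.choose k : ℚ) * (q:ℚ)^k * (i:ℚ)^k) * S q (p-k) := by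
    intro i _
    have h1 : ∀ j : ℕ, ((q*i+j : ℕ) : ZMod q) = ((j:ℕ) : ZMod q) := by
      intro j; push_cast; simp [ZMod.natCast_self]
    have h2 : ∀ j : ℕ, (((q*i+j : ℕ)):ℚ)^p
        = ∑ k ∈ range (p+1), ((q:ℚ)*(i:ℚ))^k * (j:ℚ)^(p-k) * (p.choose k : ℚ) := by
      intro j
      rw [show (((q*i+j : ℕ)):ℚ) = (q:ℚ)*(i:ℚ) + (j:ℚ) by push_cast; ring, add_pow]
    calc ∑ j ∈ range q, chi' q ((q*i+j : ℕ) : ZMod q) * ((q*i+j:ℕ):ℚ)^p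
        = ∑ j ∈ range q, ∑ k ∈ range (p+1),
            ((p.choose k : ℚ) * (q:ℚ)^k * (i:ℚ)^k) * (chi' q ((j:ℕ):ZMod q) * (j:ℚ)^(p-k)) := by
          apply Finset.sum_congr rfl
          intro j _
          rw [h1 j, h2 j, Finset.mul_sum]
          apply Finset.sum_congr rfl
          intro k _
          rw [mul_pow]
          ring
      _ = ∑ k ∈ range (p+1), ∑ j ∈ range q,
            ((p.choose k : ℚ) * (q:ℚ)^k * (i:ℚ)^k) * (chi' q ((j:ℕ):ZMod q) * (j:ℚ)^(p-k)) :=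
          Finset.sum_comm
      _ = ∑ k ∈ range (p+1), ((p.choose k : ℚ) * (q:ℚ)^k * (i:ℚ)^k) * S q (p-k) := by
          apply Finset.sum_congr rfl
          intro k _
          rw [← Finset.mul_sum]
          rfl
  rw [Finset.sum_congr rfl key, Finset.sum_comm]
  apply Finset.sum_congr rfl
  intro k _
  rw [Finset.mul_sum, Finset.sum_mul]

/-- the expanded form of `q * B_{p,χ}`. -/
def QBp : ℚ := ∑ i ∈ range (p+1), _root_.bernoulli i * (p.choose i : ℚ) * (q:ℚ)^i * S q (p-i)

lemma L2 (hp1 : 1 ≤ p) :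
    (q:ℚ) * ((q : ℚ) ^ (p - 1) *
      ∑ a ∈ range q, chi' q ((a:ℕ) : ZMod q) * (Polynomial.bernoulli p).eval ((a : ℚ) / q))
    = QBp q p := by
  have hq0 : (q:ℚ) ≠ 0 := by exact_mod_cast hq.out.ne_zero
  have hqq : (q:ℚ) * (q:ℚ)^(p-1) = (q:ℚ)^p := by
    rw [← pow_succ']
    congr 1
    omega
  rw [← mul_assoc, hqq, Finset.mul_sum]
  have key : ∀ i ∈ range (p+1), ∀ a : ℕ, (q:ℚ)^p * ((a:ℚ)/q)^(p-i) = (q:ℚ)^i * (a:ℚ)^(p-i) := by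
    intro i hi a
    have hip : i ≤ p := by have := Finset.mem_range.mp hi; omega
    rw [div_pow, show (q:ℚ)^p = (q:ℚ)^i * (q:ℚ)^(p-i) by rw [← pow_add]; congr 1; omega]
    field_simp
  calc ∑ a ∈ range q, (q:ℚ)^p * (chi' q ((a:ℕ) : ZMod q) * (Polynomial.bernoulli p).eval ((a : ℚ) / q))
      = ∑ a ∈ range q, ∑ i ∈ range (p+1),
          (_root_.bernoulli i * (p.choose i : ℚ) * (q:ℚ)^i) * (chi' q ((a:ℕ):ZMod q) * (a:ℚ)^(p-i)) := by
        apply Finset.sum_congr rfl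
        intro a _
        rw [bern_eval p ((a:ℚ)/q), Finset.mul_sum, Finset.mul_sum]
        apply Finset.sum_congr rfl
        intro i hi
        rw [show (q:ℚ)^p * (chi' q ((a:ℕ):ZMod q) * (_root_.bernoulli i * (p.choose i:ℚ) * ((a:ℚ)/q)^(p-i)))
            = (_root_.bernoulli i * (p.choose i:ℚ)) * ((q:ℚ)^p * ((a:ℚ)/q)^(p-i)) * chi' q ((a:ℕ):ZMod q) by ring,
          key i hi a]
        ring
    _ = ∑ i ∈ range (p+1), ∑ a ∈ range q,
          (_root_.bernoulli i * (p.choose i : ℚ) * (q:ℚ)^i) * (chi' q ((a:ℕ):ZMod q) * (a:ℚ)^(p-i)) :=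
        Finset.sum_comm
    _ = QBp q p := by
        apply Finset.sum_congr rfl
        intro i _
        rw [← Finset.mul_sum]
        rfl

lemma F2 (hq2 : q ≠ 2) (hp3 : 3 < p) :
    padicNorm p (U q p p - p * QBp q p) ≤ eps p 3 := by
  rw [U_p_expand q p]
  unfold QBp
  rw [show (∑ k ∈ range (p+1), (p.choose k : ℚ) * (q:ℚ)^k * (∑ i ∈ range p, (i:ℚ)^k) * S q (p-k))
      - (p:ℚ) * ∑ i ∈ range (p+1), _root_.bernoulli i * (p.choose i : ℚ) * (q:ℚ)^i * S q (p-i)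
      = ∑ k ∈ range (p+1), ((p.choose k : ℚ) * (q:ℚ)^k * S q (p-k))
          * ((∑ i ∈ range p, (i:ℚ)^k) - (p:ℚ) * _root_.bernoulli k) by
    rw [Finset.mul_sum, ← Finset.sum_sub_distrib]
    apply Finset.sum_congr rfl
    intro k _
    ring]
  apply norm_sum_le
  intro k hk
  have hk' : k ≤ p := by have := Finset.mem_range.mp hk; omega
  rcases Nat.eq_zero_or_pos k with rfl | hk0
  · have hM0 : (∑ i ∈ range p, (i:ℚ)^0) - (p:ℚ) * _root_.bernoulli 0 = 0 := by
      simp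
    rw [hM0, mul_zero, padicNorm.zero]
    exact eps_nonneg 3
  by_cases hkp : k = p
  · have hS0 : S q (p - k) = 0 := by
      rw [hkp, Nat.sub_self]
      exact S_zero q hq2
    rw [hS0, mul_zero, zero_mul, padicNorm.zero]
    exact eps_nonneg 3
  · have hklt : k ≤ p - 1 := by omega
    have hqk : padicNorm p ((q:ℚ)^k) ≤ eps p 0 := by
      rw [show ((q:ℚ))^k = ((q^k : ℕ) : ℚ) by push_cast; ring]
      exact norm_nat _
    have h1 : padicNorm p ((p.choose k : ℚ) * (q:ℚ)^k * S q (p-k)) ≤ eps p 1 := by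
      have := norm_mul_le (norm_mul_le (norm_choose_p (p := p) (j := k) (by omega) (by omega)) hqk) (norm_S q p (p-k))
      simpa using this
    have h2 := sigma_norm (p := p) hp3 hk0 hklt
    have := norm_mul_le h1 h2
    simpa using this

lemma norm_div_p {x : ℚ} {a : ℕ} (hx : padicNorm p x ≤ eps p (a+1)) :
    padicNorm p (x / p) ≤ eps p a := by
  have hp0 : (p:ℚ) ≠ 0 := by exact_mod_cast hp.out.ne_zero
  have hppos : (0:ℚ) < (p:ℚ) := by exact_mod_cast hp.out.pos
  have h1 : padicNorm p x = padicNorm p (x/p) * ((p:ℚ))⁻¹ := by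
    rw [← padicNorm.padicNorm_p (p := p) hp.out.one_lt, ← padicNorm.mul]
    congr 1
    field_simp
  have h2 : padicNorm p (x/p) = padicNorm p x * (p:ℚ) := by
    rw [h1]
    field_simp
  rw [h2]
  have heps : eps p (a+1) * (p:ℚ) = eps p a := by
    unfold eps
    rw [pow_succ]
    field_simp
  rw [← heps]
  exact mul_le_mul_of_nonneg_right hx hppos.le

lemma fermat_dvd {j : ℕ} (hj0 : 1 ≤ j) (hjp : j < p) :
    ((p:ℤ)) ∣ ((j:ℤ)^(p-1) - 1) := by
  have hjz : ((j:ℕ) : ZMod p) ≠ 0 := by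
    rw [Ne, ZMod.natCast_eq_zero_iff]
    exact not_dvd_small (by omega) hjp
  have hf : ((j:ℕ) : ZMod p)^(p-1) = 1 := ZMod.pow_card_sub_one_eq_one hjz
  rw [← ZMod.intCast_zmod_eq_zero_iff_dvd]
  push_cast
  rw [hf]
  ring

lemma F3 (hq2 : q ≠ 2) (hqp : ¬ q ∣ p) (hp3 : 3 < p) :
    padicNorm p (U q p p - p * U q p 1 + chi' q ((p:ℕ) : ZMod q) * (p:ℚ)^2 * S q 1)
      ≤ eps p 3 := by
  have h3p : 3 ≤ p := by omega
  set c : ℚ := chi' q ((p:ℕ) : ZMod q) with hc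
  have hU : ∀ n : ℕ, U q p n
      = ∑ j ∈ range p, ∑ i ∈ range q, chi' q ((p*i+j : ℕ) : ZMod q) * ((p*i+j:ℕ):ℚ)^n := by
    intro n
    unfold U
    rw [show p*q = q*p by ring, sum_range_mul (fun a => chi' q (a : ZMod q) * (a:ℚ)^n) q p]
    exact Finset.sum_comm
  have hsplit : U q p p - p * U q p 1 + c * (p:ℚ)^2 * S q 1
      = ∑ j ∈ range p,
          ((∑ i ∈ range q, chi' q ((p*i+j : ℕ) : ZMod q)
              * (((p*i+j:ℕ):ℚ)^p - (p:ℚ)*((p*i+j:ℕ):ℚ)))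
            + (if j = 0 then c * (p:ℚ)^2 * S q 1 else 0)) := by
    rw [Finset.sum_add_distrib, Finset.sum_ite_eq' (range p) 0 (fun _ => c * (p:ℚ)^2 * S q 1),
      if_pos (Finset.mem_range.mpr (by omega : 0 < p))]
    rw [hU p, hU 1, Finset.mul_sum, ← Finset.sum_sub_distrib]
    congr 1
    apply Finset.sum_congr rfl
    intro j _
    rw [Finset.mul_sum, ← Finset.sum_sub_distrib]
    apply Finset.sum_congr rfl
    intro i _
    rw [pow_one]
    ring
  rw [hsplit]
  apply norm_sum_le
  intro j hj
  have hjp : j < p := Finset.mem_range.mp hj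
  by_cases hj0 : j = 0
  · -- j = 0 : the sum collapses to χ(p) p^p S_p
    subst hj0
    rw [if_pos rfl]
    have hcoll : (∑ i ∈ range q, chi' q ((p*i+0 : ℕ) : ZMod q)
          * (((p*i+0:ℕ):ℚ)^p - (p:ℚ)*((p*i+0:ℕ):ℚ)))
        = c * (p:ℚ)^p * S q p - c * (p:ℚ)^2 * S q 1 := by
      have hterm : ∀ i : ℕ, chi' q ((p*i+0 : ℕ) : ZMod q)
            * (((p*i+0:ℕ):ℚ)^p - (p:ℚ)*((p*i+0:ℕ):ℚ))
          = c * (p:ℚ)^p * (chi' q ((i:ℕ) : ZMod q) * (i:ℚ)^p)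
            - c * (p:ℚ)^2 * (chi' q ((i:ℕ) : ZMod q) * (i:ℚ)^1) := by
        intro i
        have hz : ((p*i+0 : ℕ) : ZMod q) = ((p:ℕ) : ZMod q) * ((i:ℕ) : ZMod q) := by
          push_cast
          ring
        have hr : (((p*i+0:ℕ)):ℚ) = (p:ℚ) * (i:ℚ) := by push_cast; ring
        rw [hz, chi'_mul, hr, mul_pow, ← hc]
        ring
      rw [Finset.sum_congr rfl (fun i _ => hterm i), Finset.sum_sub_distrib]
      unfold S
      rw [Finset.mul_sum, Finset.mul_sum]
    rw [hcoll]
    rw [show c * (p:ℚ)^p * S q p - c * (p:ℚ)^2 * S q 1 + c * (p:ℚ)^2 * S q 1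
        = c * (p:ℚ)^p * S q p by ring]
    have := norm_mul_le (norm_mul_le (norm_chi' q p ((p:ℕ) : ZMod q)) (norm_p_pow p)) (norm_S q p p)
    refine norm_le_eps_of_le (by simpa using this) (by omega)
  · -- j ≠ 0
    rw [if_neg hj0, add_zero]
    have hj1 : 1 ≤ j := by omega
    -- pointwise expansion
    have hexp : ∀ i : ℕ, (((p*i+j:ℕ)):ℚ)^p - (p:ℚ)*((p*i+j:ℕ):ℚ)
        = ((j:ℚ)^p - (p:ℚ)*(j:ℚ)) + (p:ℚ)^2*(i:ℚ)*((j:ℚ)^(p-1) - 1)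
          + ∑ k ∈ Finset.Ico 2 (p+1), ((p:ℚ)*(i:ℚ))^k * (j:ℚ)^(p-k) * (p.choose k : ℚ) := by
      intro i
      have hcast : (((p*i+j:ℕ)):ℚ) = (p:ℚ)*(i:ℚ) + (j:ℚ) := by push_cast; ring
      rw [hcast, add_pow, Finset.range_eq_Ico,
        Finset.sum_eq_sum_Ico_succ_bot (by omega : 0 < p+1),
        Finset.sum_eq_sum_Ico_succ_bot (by omega : 1 < p+1)]
      simp only [pow_zero, Nat.choose_zero_right, Nat.choose_one_right, Nat.sub_zero,
        Nat.cast_one, one_mul, mul_one, pow_one]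
      push_cast
      ring
    have hinner : (∑ i ∈ range q, chi' q ((p*i+j : ℕ) : ZMod q)
          * (((p*i+j:ℕ):ℚ)^p - (p:ℚ)*((p*i+j:ℕ):ℚ)))
        = (p:ℚ)^2*((j:ℚ)^(p-1) - 1)
            * (∑ i ∈ range q, chi' q ((p*i+j : ℕ) : ZMod q) * (i:ℚ))
          + ∑ i ∈ range q, chi' q ((p*i+j : ℕ) : ZMod q)
              * (∑ k ∈ Finset.Ico 2 (p+1), ((p:ℚ)*(i:ℚ))^k * (j:ℚ)^(p-k) * (p.choose k : ℚ)) := by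
      have hterm : ∀ i : ℕ, chi' q ((p*i+j : ℕ) : ZMod q)
            * (((p*i+j:ℕ):ℚ)^p - (p:ℚ)*((p*i+j:ℕ):ℚ))
          = chi' q ((p*i+j : ℕ) : ZMod q) * ((j:ℚ)^p - (p:ℚ)*(j:ℚ))
            + (p:ℚ)^2*((j:ℚ)^(p-1) - 1) * (chi' q ((p*i+j : ℕ) : ZMod q) * (i:ℚ))
            + chi' q ((p*i+j : ℕ) : ZMod q)
              * (∑ k ∈ Finset.Ico 2 (p+1), ((p:ℚ)*(i:ℚ))^k * (j:ℚ)^(p-k) * (p.choose k : ℚ)) := by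
        intro i
        rw [hexp i]
        ring
      rw [Finset.sum_congr rfl (fun i _ => hterm i), Finset.sum_add_distrib,
        Finset.sum_add_distrib, ← Finset.sum_mul, chi_shift_sum_nat q p hq2 hqp j,
        zero_mul, zero_add, ← Finset.mul_sum]
    rw [hinner]
    apply norm_add_le
    · -- the Fermat term
      have hf : padicNorm p ((j:ℚ)^(p-1) - 1) ≤ eps p 1 := by
        rw [show ((j:ℚ))^(p-1) - 1 = (((j:ℤ)^(p-1) - 1 : ℤ) : ℚ) by push_cast; ring]
        exact norm_int_dvd (p := p) (k := 1) (z := (j:ℤ)^(p-1) - 1)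
          (by rw [pow_one]; exact fermat_dvd (p := p) hj1 hjp)
      have hw : padicNorm p (∑ i ∈ range q, chi' q ((p*i+j : ℕ) : ZMod q) * (i:ℚ)) ≤ eps p 0 := by
        apply norm_sum_le
        intro i _
        simpa using norm_mul_le (norm_chi' q p _) (norm_nat (p := p) i)
      have := norm_mul_le (norm_mul_le (norm_p_pow 2) hf) hw
      simpa using this
    · -- the remainder term
      apply norm_sum_le
      intro i _
      have hrem : padicNorm p (∑ k ∈ Finset.Ico 2 (p+1),
          ((p:ℚ)*(i:ℚ))^k * (j:ℚ)^(p-k) * (p.choose k : ℚ)) ≤ eps p 3 := by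
        apply norm_sum_le
        intro k hk
        have hk2 : 2 ≤ k := (Finset.mem_Ico.mp hk).1
        have hkp : k ≤ p := by have := (Finset.mem_Ico.mp hk).2; omega
        have hpi : padicNorm p (((p:ℚ)*(i:ℚ))^k) ≤ eps p k := by
          rw [mul_pow]
          have h2 : padicNorm p ((i:ℚ)^k) ≤ eps p 0 := by
            rw [show ((i:ℚ))^k = ((i^k : ℕ) : ℚ) by push_cast; ring]
            exact norm_nat _
          simpa using norm_mul_le (norm_p_pow k) h2
        have hjk : padicNorm p ((j:ℚ)^(p-k)) ≤ eps p 0 := by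
          rw [show ((j:ℚ))^(p-k) = ((j^(p-k) : ℕ) : ℚ) by push_cast; ring]
          exact norm_nat _
        by_cases hkp' : k = p
        · have hch : padicNorm p ((p.choose k : ℚ)) ≤ eps p 0 := norm_nat _
          have := norm_mul_le (norm_mul_le hpi hjk) hch
          refine norm_le_eps_of_le (by simpa using this) (by omega)
        · have hch : padicNorm p ((p.choose k : ℚ)) ≤ eps p 1 :=
            norm_choose_p (p := p) (j := k) (by omega) (by omega)
          have := norm_mul_le (norm_mul_le hpi hjk) hch
          refine norm_le_eps_of_le (by simpa using this) (by omega)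
      simpa using norm_mul_le (norm_chi' q p _) hrem

lemma icc_to_range (g : ℕ → ℚ) :
    ∑ a ∈ Finset.Icc 1 (q-1), ((legendreSym q (a:ℤ)) : ℚ) * g a
      = ∑ a ∈ range q, chi' q ((a:ℕ) : ZMod q) * g a := by
  have hq1 : 1 ≤ q := hq.out.pos
  have hr : range q = insert 0 (Finset.Icc 1 (q-1)) := by
    ext a
    simp only [Finset.mem_range, Finset.mem_Icc, Finset.mem_insert]
    omega
  rw [hr, Finset.sum_insert (by simp)]
  rw [show chi' q ((0:ℕ) : ZMod q) = 0 by simpa using chi'_zero q]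
  rw [zero_mul, zero_add]
  apply Finset.sum_congr rfl
  intro a _
  rw [chi_eq q a]

end Main
end KummerAux

open KummerAux in
/-- **Kummer-type congruence `B_{p,χ}/p ≡ (1 − χ(p)) B_{1,χ} (mod p)` for the
quadratic character `χ = legendreSym q`, `q ≡ 3 (mod 4)`.** -/
theorem generalized_bernoulli_kummer_congruence
    (q : ℕ) [hqF : Fact q.Prime] (hq4 : q % 4 = 3)
    (p : ℕ) (hp : p.Prime) (hp3 : 3 < p) (hpq : p ≠ q)
    (Bpχ B1χ : ℚ)
    (hBp : Bpχ = (q : ℚ) ^ (p - 1) *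
      ∑ a ∈ Finset.Icc 1 (q - 1), (legendreSym q a : ℚ) *
        (Polynomial.bernoulli p).eval ((a : ℚ) / q))
    (hB1 : B1χ = ∑ a ∈ Finset.Icc 1 (q - 1), (legendreSym q a : ℚ) *
      ((a : ℚ) / q - 1 / 2)) :
    Bpχ / p - (1 - (legendreSym q p : ℚ)) * B1χ = 0 ∨
      1 ≤ padicValRat p (Bpχ / p - (1 - (legendreSym q p : ℚ)) * B1χ) := by
  haveI hpF : Fact p.Prime := ⟨hp⟩
  have hqprime := hqF.out
  have hq2 : q ≠ 2 := by omega
  have hqp : ¬ q ∣ p := by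
    intro h
    exact hpq ((Nat.prime_dvd_prime_iff_eq hqprime hp).mp h).symm
  have hpq' : ¬ p ∣ q := by
    intro h
    exact hpq ((Nat.prime_dvd_prime_iff_eq hp hqprime).mp h)
  have hq0 : (q:ℚ) ≠ 0 := by exact_mod_cast hqprime.ne_zero
  have hp0 : (p:ℚ) ≠ 0 := by exact_mod_cast hp.ne_zero
  set c : ℚ := ((legendreSym q (p:ℤ)) : ℚ) with hcdef
  have hc : c = chi' q ((p:ℕ) : ZMod q) := chi_eq q p
  have hqB1 : (q:ℚ) * B1χ = S q 1 := by
    rw [hB1, icc_to_range q (fun a => ((a:ℚ)/q - 1/2)), Finset.mul_sum]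
    unfold S
    have hterm : ∀ a : ℕ, (q:ℚ) * (chi' q ((a:ℕ):ZMod q) * ((a:ℚ)/q - 1/2))
        = chi' q ((a:ℕ):ZMod q) * (a:ℚ)^1 - ((q:ℚ)/2) * chi' q ((a:ℕ):ZMod q) := by
      intro a
      field_simp
    rw [Finset.sum_congr rfl (fun a _ => hterm a), Finset.sum_sub_distrib, ← Finset.mul_sum,
      Schi0 q hq2, mul_zero, sub_zero]
  have hqBp : (q:ℚ) * Bpχ = QBp q p := by
    rw [hBp, icc_to_range q (fun a => (Polynomial.bernoulli p).eval ((a:ℚ)/q))]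
    exact L2 q p (by omega)
  have hE1 := F2 q p hq2 hp3
  have hE2 := F3 q p hq2 hqp hp3
  have hF1' := F1 q p hq2
  have hY : (U q p p - p * U q p 1 + chi' q ((p:ℕ):ZMod q) * (p:ℚ)^2 * S q 1)
        - (U q p p - p * QBp q p)
      = (p:ℚ)^2 * (q:ℚ) * (Bpχ/p - (1 - c) * B1χ) := by
    rw [hF1', ← hc, ← hqBp, ← hqB1]
    field_simp
    ring
  have hNY := norm_sub_le hE2 hE1
  rw [hY] at hNY
  set X : ℚ := Bpχ/p - (1 - c) * B1χ with hXdef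
  have hXeq : X = (((p:ℚ)^2 * (q:ℚ) * X) / p / p) / q := by
    field_simp
  have hNX : padicNorm p X ≤ eps p 1 := by
    rw [hXeq]
    exact norm_div_nat (norm_div_p p (norm_div_p p hNY)) hpq'
  by_cases hX0 : X = 0
  · left
    exact hX0
  · right
    have hnz := padicNorm.eq_zpow_of_nonzero (p := p) hX0
    rw [hnz] at hNX
    have heps : eps p 1 = (p:ℚ)^(-(1:ℤ)) := by
      unfold eps
      rw [zpow_neg, zpow_one, pow_one]
    rw [heps] at hNX
    have hp1 : (1:ℚ) < (p:ℚ) := by exact_mod_cast hp.one_lt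
    have hv := (zpow_le_zpow_iff_right₀ hp1).mp hNX
    omega
end
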